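/- arXiv:1511.06544 — 4 statements merged into one kernel-verified Lean document; each statement's English description precedes it below -/
import Mathlib

section
/- Let (X_i, Y_i), i = 1,2,..., be independent random vectors with common law P satisfying (G1'), let the kernels satisfy (G3) and the bandwidths satisfy (G4'). Then there exists a constant c > 0, depending only on K, such that P( p̂_{n,0}(x) p̂_{n,2}(x) − p̂_{n,1}(x)² ≥ b²c for all x ∈ S_X ) → 1 as n → ∞. -/
open MeasureTheory ProbabilityTheory Filter Set Topology

noncomputable section

/-- Generalized inverse `F⁻(u) = inf { y : F y ≥ u }`. -/
def genInv (F : ℝ → ℝ) (u : ℝ) : ℝ := sInf {y : ℝ | u ≤ F y}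

/-- The Hölder regularity class `C_{k+δ,M}(S)`: `k` times differentiable, all
derivatives up to order `k` (including the function) bounded by `M`, and the
order-`k` derivative `δ`-Hölder with constant `M`. -/
def HClass {E : Type*} [NormedAddCommGroup E] [NormedSpace ℝ E]
    (k : ℕ) (δ M : ℝ) (S : Set E) (f : E → ℝ) : Prop :=
  ContDiffOn ℝ k f S ∧
  (∀ l : ℕ, l ≤ k → ∀ z ∈ S, ‖iteratedFDerivWithin ℝ l f S z‖ ≤ M) ∧
  ∀ z ∈ S, ∀ z' ∈ S,
    ‖iteratedFDerivWithin ℝ k f S z - iteratedFDerivWithin ℝ k f S z'‖ ≤ M * ‖z - z'‖ ^ δ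

/-- Basic kernel requirements of (G3): bounded, nonnegative, symmetric,
supported in `(-1,1)`, integrating to one. -/
def KernelBase (K : ℝ → ℝ) : Prop :=
  (∃ C, ∀ u, K u ≤ C) ∧ (∀ u, 0 ≤ K u) ∧ (∀ u, K (-u) = K u) ∧
  (∀ u, u ∉ Set.Ioo (-1 : ℝ) 1 → K u = 0) ∧ (∫ u, K u) = 1

/-- (G3) requirements on the kernel `L`. -/
def KernelCondL (L : ℝ → ℝ) : Prop :=
  KernelBase L ∧ ContDiff ℝ 1 L ∧ (∃ C, ∀ u, |deriv L u| ≤ C) ∧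
  BoundedVariationOn (deriv L) Set.univ

/-- (G3) requirements on the kernel `K`. -/
def KernelCondK (K : ℝ → ℝ) : Prop :=
  KernelBase K ∧ ContDiff ℝ 2 K ∧ (∃ C, ∀ u, |deriv (deriv K) u| ≤ C) ∧
  BoundedVariationOn (deriv (deriv K)) Set.univ

/-- `φ_h(y, Y) = ∫_{-∞}^y h⁻¹ L((t-Y)/h) dt`. -/
def phiSm (L : ℝ → ℝ) (h y Y : ℝ) : ℝ := ∫ t in Set.Iic y, h⁻¹ * L ((t - Y) / h)

/-- `w_k(u) = u^k K(u)`. -/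
def wk (K : ℝ → ℝ) (k : ℕ) (u : ℝ) : ℝ := u ^ k * K u

/-- `p̂_{n,k}(x)`. -/
def phat {Ω : Type*} (K : ℝ → ℝ) (h1 : ℕ → ℝ) (X : ℕ → Ω → ℝ)
    (n k : ℕ) (x : ℝ) (ω : Ω) : ℝ :=
  (n : ℝ)⁻¹ * ∑ i ∈ Finset.range n, (h1 n)⁻¹ * wk K k ((x - X i ω) / h1 n)

/-- `Q̂_{n,k}(y,x)`. -/
def Qhat {Ω : Type*} (K L : ℝ → ℝ) (h1 h2 : ℕ → ℝ) (X Y : ℕ → Ω → ℝ)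
    (n k : ℕ) (y x : ℝ) (ω : Ω) : ℝ :=
  (n : ℝ)⁻¹ * ∑ i ∈ Finset.range n,
    phiSm L (h2 n) y (Y i ω) * ((h1 n)⁻¹ * wk K k ((x - X i ω) / h1 n))

/-- The smoothed local linear estimator `F̂_n(y|x)` in closed form. -/
def Fhat {Ω : Type*} (K L : ℝ → ℝ) (h1 h2 : ℕ → ℝ) (X Y : ℕ → Ω → ℝ)
    (n : ℕ) (y x : ℝ) (ω : Ω) : ℝ :=
  (Qhat K L h1 h2 X Y n 0 y x ω * phat K h1 X n 2 x ω
      - Qhat K L h1 h2 X Y n 1 y x ω * phat K h1 X n 1 x ω) /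
    (phat K h1 X n 0 x ω * phat K h1 X n 2 x ω - (phat K h1 X n 1 x ω) ^ 2)

/-- Bandwidth conditions (G4'). -/
structure BandG4' (h1 h2 : ℕ → ℝ) : Prop where
  pos1 : ∀ n, 0 < h1 n
  pos2 : ∀ n, 0 < h2 n
  to0₁ : Tendsto h1 atTop (𝓝 0)
  to0₂ : Tendsto h2 atTop (𝓝 0)
  r1 : Tendsto (fun n : ℕ => (n : ℝ) * h1 n ^ 3 / |Real.log (h1 n)|) atTop atTop
  r2 : Tendsto (fun n : ℕ => (n : ℝ) * (h1 n * h2 n) / |Real.log (h1 n * h2 n)|) atTop atTop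

/-- Bandwidth conditions (G4), for a given `α > 0`. -/
structure BandG4 (h1 h2 : ℕ → ℝ) (α : ℝ) : Prop where
  αpos : 0 < α
  pos1 : ∀ n, 0 < h1 n
  pos2 : ∀ n, 0 < h2 n
  b1 : Tendsto (fun n : ℕ => (n : ℝ) * h1 n ^ 8) atTop (𝓝 0)
  b2 : Tendsto (fun n : ℕ => (n : ℝ) * h2 n ^ 8) atTop (𝓝 0)
  b3 : Tendsto (fun n => h1 n ^ ((-1 : ℝ) - α / 2) * h2 n ^ 2) atTop (𝓝 0)
  b4 : Tendsto (fun n : ℕ => (n : ℝ) * h1 n ^ ((3 : ℝ) + α) / |Real.log (h1 n)|) atTop atTop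
  b5 : Tendsto (fun n : ℕ => (n : ℝ) * h1 n ^ ((1 : ℝ) + α) * h2 n / |Real.log (h1 n * h2 n)|)
        atTop atTop

/-- Bandwidth conditions (G4''), for a given `α > 0`. -/
structure BandG4'' (h1 h2 : ℕ → ℝ) (α : ℝ) : Prop where
  αpos : 0 < α
  pos1 : ∀ n, 0 < h1 n
  pos2 : ∀ n, 0 < h2 n
  to0₁ : Tendsto h1 atTop (𝓝 0)
  to0₂ : Tendsto h2 atTop (𝓝 0)
  b3 : Tendsto (fun n => h1 n ^ ((-1 : ℝ) - α / 2) * h2 n ^ 2) atTop (𝓝 0)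
  b4 : Tendsto (fun n : ℕ => (n : ℝ) * h1 n ^ ((3 : ℝ) + α) / |Real.log (h1 n)|) atTop atTop
  b5 : Tendsto (fun n : ℕ => (n : ℝ) * h1 n ^ ((1 : ℝ) + α) * h2 n / |Real.log (h1 n * h2 n)|)
        atTop atTop

/-- Marginal density of `X` built from a joint density of `(X,Y)`. -/
def fXm (fXY : ℝ → ℝ → ℝ) (x : ℝ) : ℝ := ∫ z, fXY x z

/-- Conditional distribution function `F(y|x)` built from a joint density. -/
def condCDF2 (fXY : ℝ → ℝ → ℝ) (y x : ℝ) : ℝ :=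
  (∫ z in Set.Iic y, fXY x z) / fXm fXY x

/-- Conditional density `f(y|x)` built from a joint density. -/
def condPDF2 (fXY : ℝ → ℝ → ℝ) (y x : ℝ) : ℝ := fXY x y / fXm fXY x

/-- Condition (G1') on the law of the pair `(X,Y)`, described through its
joint density `fXY` on `S_X × ℝ`, `S_X = (s0, s1)`. -/
structure CondG1 (fXY : ℝ → ℝ → ℝ) (s0 s1 b M δ : ℝ) : Prop where
  hs : s0 < s1
  hb : 0 < b
  hM : 0 < M
  hδ0 : 0 < δ
  hδ1 : δ ≤ 1
  nonneg : ∀ x y, 0 ≤ fXY x y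
  supp : ∀ x y, x ∉ Set.Ioo s0 s1 → fXY x y = 0
  Freg : HClass 3 δ M (Set.univ ×ˢ Set.Ioo s0 s1)
    (fun p : ℝ × ℝ => condCDF2 fXY p.1 p.2)
  fXreg : HClass 1 1 M (Set.Ioo s0 s1) (fXm fXY)
  fXlb : ∀ x ∈ Set.Ioo s0 s1, b ≤ fXm fXY x
  flb : ∀ γ ∈ Set.Ioo (0 : ℝ) (1 / 2), ∃ bγ > (0 : ℝ), ∀ x ∈ Set.Ioo s0 s1,
    ∀ y ∈ Set.Icc (genInv (fun z => condCDF2 fXY z x) γ)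
        (genInv (fun z => condCDF2 fXY z x) (1 - γ)),
      bγ ≤ condPDF2 fXY y x

/-- The data `(X_i, Y_i)` are i.i.d. with common law having density `fXY`. -/
structure IIDLaw2 {Ω : Type*} [MeasurableSpace Ω] (P : Measure Ω)
    (X Y : ℕ → Ω → ℝ) (fXY : ℝ → ℝ → ℝ) : Prop where
  measX : ∀ i, Measurable (X i)
  measY : ∀ i, Measurable (Y i)
  indep : iIndepFun (fun i ω => (X i ω, Y i ω)) P
  ident : ∀ i, IdentDistrib (fun ω => (X i ω, Y i ω)) (fun ω => (X 0 ω, Y 0 ω)) P P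
  law : Measure.map (fun ω => (X 0 ω, Y 0 ω)) P
    = (volume : Measure (ℝ × ℝ)).withDensity (fun p => ENNReal.ofReal (fXY p.1 p.2))

lemma kernel_pos_interval {K : ℝ → ℝ} (hb : KernelBase K) (hc : Continuous K) :
    ∃ k0 > (0:ℝ), ∃ c1 c2 : ℝ, 0 < c1 ∧ c1 < c2 ∧ c2 < 1 ∧
      ∀ u : ℝ, |u| ∈ Set.Icc c1 c2 → k0 ≤ K u := by
  obtain ⟨-, hnn, hsymm, hsupp, hint⟩ := hb
  have hex : ∃ u0, 0 < K u0 := by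
    by_contra h; push_neg at h
    have hz : K = fun _ => 0 := funext fun u => le_antisymm (h u) (hnn u)
    rw [hz] at hint; simp at hint
  obtain ⟨u0, hu0⟩ := hex
  have hex1 : ∃ u1 : ℝ, 0 < u1 ∧ u1 < 1 ∧ 0 < K u1 := by
    have hu0mem : u0 ∈ Set.Ioo (-1:ℝ) 1 := by
      by_contra h; rw [hsupp u0 h] at hu0; exact lt_irrefl 0 hu0
    rcases lt_trichotomy u0 0 with h | h | h
    · refine ⟨-u0, by linarith, by linarith [hu0mem.1], ?_⟩
      rw [hsymm u0]; exact hu0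
    · subst h
      have hev : ∀ᶠ u in 𝓝 (0:ℝ), 0 < K u :=
        (hc.continuousAt (x := 0)).eventually (eventually_gt_nhds hu0)
      rcases Metric.eventually_nhds_iff.1 hev with ⟨ε, hε, hball⟩
      refine ⟨min (ε/2) (1/2), by positivity, ?_, ?_⟩
      · calc min (ε/2) (1/2) ≤ 1/2 := min_le_right _ _
          _ < 1 := by norm_num
      · apply hball
        rw [Real.dist_eq, sub_zero, abs_of_pos (by positivity)]
        calc min (ε/2) (1/2) ≤ ε/2 := min_le_left _ _
          _ < ε := by linarith
    · exact ⟨u0, h, hu0mem.2, hu0⟩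
  obtain ⟨u1, hu1p, hu1l, hKu1⟩ := hex1
  have hev : ∀ᶠ u in 𝓝 u1, K u1/2 < K u :=
    (hc.continuousAt (x := u1)).eventually (eventually_gt_nhds (by linarith))
  rcases Metric.eventually_nhds_iff.1 hev with ⟨ε, hεpos, hball⟩
  have hmin : 0 < min (u1/2) ((1-u1)/2) := lt_min (by linarith) (by linarith)
  set d := min (ε/2) (min (u1/2) ((1-u1)/2)) with hd
  have hdpos : 0 < d := lt_min (by linarith) hmin
  have hd1 : d ≤ ε/2 := min_le_left _ _
  have hd2 : d ≤ u1/2 := le_trans (min_le_right _ _) (min_le_left _ _)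
  have hd3 : d ≤ (1-u1)/2 := le_trans (min_le_right _ _) (min_le_right _ _)
  refine ⟨K u1/2, by linarith, u1 - d, u1 + d, by linarith, by linarith, by linarith, ?_⟩
  intro u hu
  have h1 : |(|u|) - u1| ≤ d := abs_le.2 ⟨by linarith [hu.1], by linarith [hu.2]⟩
  have h2 : dist |u| u1 < ε := by rw [Real.dist_eq]; linarith
  have h3 := hball h2
  rcases abs_choice u with h | h
  · rw [h] at h3; linarith
  · rw [h, hsymm u] at h3; linarith

lemma det_sum_lb (n : ℕ) (a u : ℕ → ℝ) (ha : ∀ i, 0 ≤ a i) (A B : Finset ℕ)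
    (hA : A ⊆ Finset.range n) (hB : B ⊆ Finset.range n) (k0 g : ℝ)
    (hk0 : 0 ≤ k0) (hg : 0 ≤ g)
    (haA : ∀ i ∈ A, k0 ≤ a i) (haB : ∀ j ∈ B, k0 ≤ a j)
    (hsep : ∀ i ∈ A, ∀ j ∈ B, g ≤ |u i - u j|) :
    (A.card : ℝ) * B.card * (k0^2 * g^2) / 2 ≤
      (∑ i ∈ Finset.range n, a i) * (∑ i ∈ Finset.range n, (u i)^2 * a i)
        - (∑ i ∈ Finset.range n, u i * a i)^2 := by
  set s := Finset.range n with hs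
  have key : (∑ i ∈ s, a i) * (∑ i ∈ s, (u i)^2 * a i) - (∑ i ∈ s, u i * a i)^2
      = (∑ i ∈ s, ∑ j ∈ s, a i * a j * (u i - u j)^2) / 2 := by
    have h1 : ∑ i ∈ s, ∑ j ∈ s, a i * a j * (u i - u j)^2
        = ∑ i ∈ s, ∑ j ∈ s,
            ((u i^2 * a i) * a j - ((u i * a i) * (u j * a j) + (u i * a i) * (u j * a j))
              + a i * (u j^2 * a j)) :=
      Finset.sum_congr rfl fun i _ => Finset.sum_congr rfl fun j _ => by ring
    rw [h1]
    simp only [Finset.sum_add_distrib, Finset.sum_sub_distrib,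
      ← Finset.sum_mul_sum]
    ring
  rw [key]
  have hterm : ∀ i j, 0 ≤ a i * a j * (u i - u j)^2 := fun i j =>
    mul_nonneg (mul_nonneg (ha i) (ha j)) (sq_nonneg _)
  have step3 : (A.card : ℝ) * B.card * (k0^2 * g^2)
      ≤ ∑ i ∈ A, ∑ j ∈ B, a i * a j * (u i - u j)^2 := by
    have hone : ∀ i ∈ A, ∀ j ∈ B, k0^2 * g^2 ≤ a i * a j * (u i - u j)^2 := by
      intro i hi j hj
      have hsq : g^2 ≤ (u i - u j)^2 := by
        have h := hsep i hi j hj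
        calc g^2 ≤ |u i - u j|^2 := pow_le_pow_left₀ hg h 2
          _ = (u i - u j)^2 := sq_abs _
      have hab : k0^2 ≤ a i * a j := by
        have := mul_le_mul (haA i hi) (haB j hj) hk0 (le_trans hk0 (haA i hi))
        nlinarith
      exact mul_le_mul hab hsq (sq_nonneg g) (mul_nonneg (ha i) (ha j))
    calc (A.card : ℝ) * B.card * (k0^2 * g^2)
        = ∑ _i ∈ A, ∑ _j ∈ B, k0^2 * g^2 := by
          simp [Finset.sum_const, nsmul_eq_mul]; ring
      _ ≤ ∑ i ∈ A, ∑ j ∈ B, a i * a j * (u i - u j)^2 :=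
          Finset.sum_le_sum fun i hi => Finset.sum_le_sum fun j hj => hone i hi j hj
  have step1 : ∀ i, (∑ j ∈ B, a i * a j * (u i - u j)^2)
      ≤ ∑ j ∈ s, a i * a j * (u i - u j)^2 := fun i =>
    Finset.sum_le_sum_of_subset_of_nonneg hB (fun j _ _ => hterm i j)
  have step2 : (∑ i ∈ A, ∑ j ∈ B, a i * a j * (u i - u j)^2)
      ≤ ∑ i ∈ s, ∑ j ∈ B, a i * a j * (u i - u j)^2 :=
    Finset.sum_le_sum_of_subset_of_nonneg hA
      (fun i _ _ => Finset.sum_nonneg fun j _ => hterm i j)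
  have step4 : (∑ i ∈ s, ∑ j ∈ B, a i * a j * (u i - u j)^2)
      ≤ ∑ i ∈ s, ∑ j ∈ s, a i * a j * (u i - u j)^2 :=
    Finset.sum_le_sum fun i _ => step1 i
  linarith

section CDF
variable {fXY : ℝ → ℝ → ℝ} {s0 s1 b M δ : ℝ} (hG1 : CondG1 fXY s0 s1 b M δ)
include hG1

lemma fXm_pos {x : ℝ} (hx : x ∈ Set.Ioo s0 s1) : 0 < fXm fXY x :=
  lt_of_lt_of_le hG1.hb (hG1.fXlb x hx)

lemma fXY_integrable {x : ℝ} (hx : x ∈ Set.Ioo s0 s1) : Integrable (fXY x) := by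
  by_contra h
  have hz : fXm fXY x = 0 := integral_undef h
  have := fXm_pos hG1 hx
  rw [hz] at this; exact lt_irrefl 0 this

lemma condCDF2_mono {x : ℝ} (hx : x ∈ Set.Ioo s0 s1) :
    Monotone (fun y => condCDF2 fXY y x) := by
  intro y y' hyy'
  have hpos := fXm_pos hG1 hx
  have hfi := fXY_integrable hG1 hx
  simp only [condCDF2]
  have hnum : (∫ z in Set.Iic y, fXY x z) ≤ ∫ z in Set.Iic y', fXY x z :=
    setIntegral_mono_set hfi.integrableOn
      (Filter.Eventually.of_forall fun z => hG1.nonneg x z)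
      (HasSubset.Subset.eventuallyLE (Set.Iic_subset_Iic.2 hyy'))
  have := mul_le_mul_of_nonneg_right hnum (inv_nonneg.2 hpos.le)
  simpa [div_eq_mul_inv] using this

lemma condCDF2_cont {x : ℝ} (hx : x ∈ Set.Ioo s0 s1) :
    Continuous (fun y => condCDF2 fXY y x) := by
  have hGcont : ContinuousOn (fun p : ℝ × ℝ => condCDF2 fXY p.1 p.2)
      (Set.univ ×ˢ Set.Ioo s0 s1) := hG1.Freg.1.continuousOn
  have hSopen : IsOpen ((Set.univ : Set ℝ) ×ˢ Set.Ioo s0 s1) :=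
    isOpen_univ.prod isOpen_Ioo
  rw [continuous_iff_continuousAt]
  intro y
  have hmem : ((y, x) : ℝ × ℝ) ∈ (Set.univ : Set ℝ) ×ˢ Set.Ioo s0 s1 :=
    ⟨Set.mem_univ _, hx⟩
  have h1 : ContinuousAt (fun p : ℝ × ℝ => condCDF2 fXY p.1 p.2) (y, x) :=
    hGcont.continuousAt (hSopen.mem_nhds hmem)
  have h2 : Continuous (fun y : ℝ => ((y, x) : ℝ × ℝ)) :=
    continuous_id.prodMk continuous_const
  have h3 : ContinuousAt ((fun p : ℝ × ℝ => condCDF2 fXY p.1 p.2) ∘ (fun y : ℝ => (y, x))) y :=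
    ContinuousAt.comp (x := y) (f := fun y : ℝ => ((y, x) : ℝ × ℝ)) h1 h2.continuousAt
  exact h3

lemma condCDF2_tendsto_one {x : ℝ} (hx : x ∈ Set.Ioo s0 s1) :
    Tendsto (fun k : ℕ => condCDF2 fXY (k : ℝ) x) atTop (𝓝 1) := by
  have hfi := fXY_integrable hG1 hx
  have hpos := fXm_pos hG1 hx
  have hU : (⋃ k : ℕ, Set.Iic (k : ℝ)) = Set.univ := by
    rw [Set.eq_univ_iff_forall]
    intro z
    obtain ⟨k, hk⟩ := exists_nat_ge z
    exact Set.mem_iUnion.2 ⟨k, hk⟩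
  have hnum : Tendsto (fun k : ℕ => ∫ z in Set.Iic (k:ℝ), fXY x z) atTop
      (𝓝 (fXm fXY x)) := by
    have := tendsto_setIntegral_of_monotone (μ := volume) (f := fXY x)
      (s := fun k : ℕ => Set.Iic (k : ℝ)) (fun k => measurableSet_Iic)
      (fun k k' hkk' => Set.Iic_subset_Iic.2 (by exact_mod_cast hkk'))
      (by rw [hU]; exact hfi.integrableOn)
    rw [hU] at this
    simpa [fXm, setIntegral_univ] using this
  have := hnum.div_const (fXm fXY x)
  rw [div_self hpos.ne'] at this
  exact this

lemma condCDF2_tendsto_zero {x : ℝ} (hx : x ∈ Set.Ioo s0 s1) :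
    Tendsto (fun k : ℕ => condCDF2 fXY (-(k : ℝ)) x) atTop (𝓝 0) := by
  have hfi := fXY_integrable hG1 hx
  have hpos := fXm_pos hG1 hx
  have hnum : Tendsto (fun k : ℕ => ∫ z in Set.Iic (-(k:ℝ)), fXY x z) atTop
      (𝓝 0) := by
    have heq : ∀ k : ℕ, (∫ z in Set.Iic (-(k:ℝ)), fXY x z)
        = ∫ z, (Set.Iic (-(k:ℝ))).indicator (fXY x) z := by
      intro k; exact (integral_indicator measurableSet_Iic).symm
    simp only [heq]
    have h0 : (0:ℝ) = ∫ _z : ℝ, (0:ℝ) := by simp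
    rw [h0]
    apply tendsto_integral_of_dominated_convergence (fun z => |fXY x z|)
    · exact fun k => (hfi.aestronglyMeasurable.indicator measurableSet_Iic)
    · exact hfi.abs
    · intro k
      refine Filter.Eventually.of_forall fun z => ?_
      by_cases h : z ∈ Set.Iic (-(k:ℝ)) <;>
        simp [Set.indicator_apply, h, abs_nonneg, le_abs_self]
    · refine Filter.Eventually.of_forall fun z => ?_
      have : ∀ᶠ k : ℕ in atTop, (Set.Iic (-(k:ℝ))).indicator (fXY x) z = 0 := by
        obtain ⟨k0, hk0⟩ := exists_nat_gt (-z)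
        refine Filter.eventually_atTop.2 ⟨k0, fun k hk => ?_⟩
        have hzk : ¬ z ≤ -(k:ℝ) := by
          push_neg
          have : (k0 : ℝ) ≤ k := by exact_mod_cast hk
          linarith
        simp [Set.indicator_apply, hzk]
      exact Tendsto.congr' (this.mono fun k hk => hk.symm) tendsto_const_nhds
  have := hnum.div_const (fXm fXY x)
  simpa [condCDF2] using this

/-- properties of the generalized inverse at level `t ∈ (0,1)` -/
lemma genInv_props {x : ℝ} (hx : x ∈ Set.Ioo s0 s1) {t : ℝ} (ht0 : 0 < t) (ht1 : t < 1) :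
    t ≤ condCDF2 fXY (genInv (fun z => condCDF2 fXY z x) t) x ∧
    condCDF2 fXY (genInv (fun z => condCDF2 fXY z x) t) x ≤ t ∧
    (∀ y, t ≤ condCDF2 fXY y x → genInv (fun z => condCDF2 fXY z x) t ≤ y) ∧
    (∀ y, condCDF2 fXY y x < t → y ≤ genInv (fun z => condCDF2 fXY z x) t) := by
  set F := fun z => condCDF2 fXY z x with hF
  have hmono := condCDF2_mono hG1 hx
  have hcont := condCDF2_cont hG1 hx
  have hAne : {y : ℝ | t ≤ F y}.Nonempty := by
    have := (condCDF2_tendsto_one hG1 hx).eventually (eventually_ge_nhds ht1)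
    obtain ⟨k, hk⟩ := this.exists
    exact ⟨(k : ℝ), hk⟩
  have hbdd : BddBelow {y : ℝ | t ≤ F y} := by
    have := (condCDF2_tendsto_zero hG1 hx).eventually (eventually_lt_nhds ht0)
    obtain ⟨k, hk⟩ := this.exists
    refine ⟨-(k:ℝ), fun z hz => ?_⟩
    by_contra hlt
    push_neg at hlt
    have : F z ≤ F (-(k:ℝ)) := hmono hlt.le
    have h2 : t ≤ F (-(k:ℝ)) := le_trans hz this
    exact absurd h2 (not_le.2 hk)
  have hclosed : IsClosed {y : ℝ | t ≤ F y} := isClosed_le continuous_const hcont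
  have hqmem : genInv F t ∈ {y : ℝ | t ≤ F y} := hclosed.csInf_mem hAne hbdd
  refine ⟨hqmem, ?_, fun y hy => csInf_le hbdd hy, fun y hy => le_csInf hAne ?_⟩
  · by_contra hgt
    push_neg at hgt
    have hev : ∀ᶠ y in 𝓝 (genInv F t), t < F y :=
      (hcont.continuousAt).eventually (eventually_gt_nhds hgt)
    have hseq : Tendsto (fun n : ℕ => genInv F t - 1/(n+1)) atTop (𝓝 (genInv F t)) := by
      have := tendsto_one_div_add_atTop_nhds_zero_nat (𝕜 := ℝ)
      have h2 := tendsto_const_nhds (x := genInv F t) (f := atTop (α := ℕ)) |>.sub this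
      simpa using h2
    obtain ⟨n, hn⟩ := (hseq.eventually hev).exists
    have hmem : genInv F t - 1/(n+1) ∈ {y : ℝ | t ≤ F y} := hn.le
    have := csInf_le hbdd hmem
    have hp : (0:ℝ) < 1/(n+1) := by positivity
    simp only [genInv] at this ⊢
    linarith
  · intro z hz
    by_contra hlt
    push_neg at hlt
    have : F z ≤ F y := hmono hlt.le
    have : t ≤ F y := le_trans hz this
    linarith

lemma condCDF2_lipschitz {x : ℝ} (hx : x ∈ Set.Ioo s0 s1) (y y' : ℝ) :
    |condCDF2 fXY y x - condCDF2 fXY y' x| ≤ M * |y - y'| := by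
  set S := (Set.univ : Set ℝ) ×ˢ Set.Ioo s0 s1 with hS
  set G := fun p : ℝ × ℝ => condCDF2 fXY p.1 p.2 with hG
  have hSopen : IsOpen S := isOpen_univ.prod isOpen_Ioo
  have hconv : Convex ℝ S := convex_univ.prod (convex_Ioo s0 s1)
  have hdiff : DifferentiableOn ℝ G S :=
    hG1.Freg.1.differentiableOn (by norm_num)
  have hbound : ∀ z ∈ S, ‖fderivWithin ℝ G S z‖ ≤ M := by
    intro z hz
    have hud : UniqueDiffWithinAt ℝ S z := (hSopen.uniqueDiffOn) z hz
    have hit := hG1.Freg.2.1 1 (by norm_num) z hz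
    refine ContinuousLinearMap.opNorm_le_bound _ hG1.hM.le fun v => ?_
    have happ : iteratedFDerivWithin ℝ 1 G S z (fun _ => v)
        = fderivWithin ℝ G S z v := by
      rw [iteratedFDerivWithin_one_apply hud]
    calc ‖fderivWithin ℝ G S z v‖ = ‖iteratedFDerivWithin ℝ 1 G S z (fun _ => v)‖ := by
          rw [happ]
      _ ≤ ‖iteratedFDerivWithin ℝ 1 G S z‖ * ∏ _i : Fin 1, ‖v‖ :=
          (iteratedFDerivWithin ℝ 1 G S z).le_opNorm _
      _ = ‖iteratedFDerivWithin ℝ 1 G S z‖ * ‖v‖ := by simp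
      _ ≤ M * ‖v‖ := by
          exact mul_le_mul_of_nonneg_right hit (norm_nonneg v)
  have hkey := hconv.norm_image_sub_le_of_norm_fderivWithin_le hdiff hbound
    (x := ((y', x) : ℝ × ℝ)) (y := ((y, x) : ℝ × ℝ)) ⟨Set.mem_univ _, hx⟩ ⟨Set.mem_univ _, hx⟩
  have hnorm : ‖((y, x) : ℝ × ℝ) - ((y', x) : ℝ × ℝ)‖ = |y - y'| := by
    have : ((y, x) : ℝ × ℝ) - ((y', x) : ℝ × ℝ) = (y - y', 0) := by
      simp [Prod.ext_iff]
    rw [this, Prod.norm_def]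
    simp [Real.norm_eq_abs]
  rw [hnorm] at hkey
  simpa [hG, Real.norm_eq_abs] using hkey

end CDF


section Marg
variable {Ω : Type*} [MeasurableSpace Ω] {P : Measure Ω} [IsProbabilityMeasure P]
  {X Y : ℕ → Ω → ℝ} {fXY : ℝ → ℝ → ℝ} {s0 s1 b M δ : ℝ}

lemma marginal_lb (hG1 : CondG1 fXY s0 s1 b M δ) (hiid : IIDLaw2 P X Y fXY) :
    ∃ β > (0:ℝ), ∀ C : Set ℝ, MeasurableSet C → C ⊆ Set.Ioo s0 s1 →
      ENNReal.ofReal β * volume C ≤ P (X 0 ⁻¹' C) := by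
  obtain ⟨bγ, hbγ, hflb⟩ := hG1.flb (1/4) (by constructor <;> norm_num)
  have hM := hG1.hM
  have hb := hG1.hb
  refine ⟨bγ * b * (1/(2*M)), by positivity, ?_⟩
  intro C hC hCsub
  have hpair : Measurable (fun ω => (X 0 ω, Y 0 ω)) :=
    (hiid.measX 0).prodMk (hiid.measY 0)
  -- the region R
  set F : ℝ → ℝ → ℝ := fun x y => condCDF2 fXY y x with hFdef
  set R : Set (ℝ × ℝ) :=
    {p : ℝ × ℝ | p.1 ∈ C ∧ (1/4 : ℝ) ≤ F p.1 p.2 ∧ F p.1 p.2 < 1 - 1/4} with hRdef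
  set S := (Set.univ : Set ℝ) ×ˢ Set.Ioo s0 s1 with hS
  set G := fun p : ℝ × ℝ => condCDF2 fXY p.1 p.2 with hG
  have hSopen : IsOpen S := isOpen_univ.prod isOpen_Ioo
  have hGcont : ContinuousOn G S := hG1.Freg.1.continuousOn
  have hRmeas : MeasurableSet R := by
    have hO1 : IsOpen (S ∩ G ⁻¹' (Set.Iio (1 - 1/4 : ℝ))) :=
      hGcont.isOpen_inter_preimage hSopen isOpen_Iio
    have hO2 : IsOpen (S ∩ G ⁻¹' (Set.Iio (1/4 : ℝ))) :=
      hGcont.isOpen_inter_preimage hSopen isOpen_Iio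
    have hR' : R = (Prod.swap ⁻¹'
        (((Set.univ : Set ℝ) ×ˢ C ∩ (S ∩ G ⁻¹' (Set.Iio (1 - 1/4 : ℝ))))
          \ (S ∩ G ⁻¹' (Set.Iio (1/4 : ℝ))))) := by
      ext p
      obtain ⟨x, y⟩ := p
      simp only [hRdef, Set.mem_setOf_eq, Set.mem_preimage, Prod.swap_prod_mk,
        Set.mem_diff, Set.mem_inter_iff, Set.mem_prod, Set.mem_univ, true_and,
        Set.mem_preimage, Set.mem_Iio, hS, hG]
      constructor
      · rintro ⟨hxC, hge, hlt⟩
        exact ⟨⟨hxC, ⟨hCsub hxC, hlt⟩⟩, fun h => absurd h.2 (not_lt.2 hge)⟩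
      · rintro ⟨⟨hxC, ⟨hxI, hlt⟩⟩, hnot⟩
        refine ⟨hxC, ?_, hlt⟩
        by_contra hlt2
        push_neg at hlt2
        exact hnot ⟨hxI, hlt2⟩
    rw [hR']
    exact ((MeasurableSet.univ.prod hC).inter hO1.measurableSet).diff
      hO2.measurableSet |>.preimage measurable_swap
  -- density lower bound on R
  have hdens : ∀ p ∈ R, bγ * b ≤ fXY p.1 p.2 := by
    rintro ⟨x, y⟩ ⟨hxC, hge, hlt⟩
    have hxI : x ∈ Set.Ioo s0 s1 := hCsub hxC
    obtain ⟨hq1, hq2, hq3, hq4⟩ := genInv_props hG1 hxI (t := 1/4) (by norm_num) (by norm_num)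
    obtain ⟨hp1, hp2, hp3, hp4⟩ := genInv_props hG1 hxI (t := 1 - 1/4) (by norm_num) (by norm_num)
    have hyIcc : y ∈ Set.Icc (genInv (fun z => condCDF2 fXY z x) (1/4))
        (genInv (fun z => condCDF2 fXY z x) (1 - 1/4)) :=
      ⟨hq3 y hge, hp4 y hlt⟩
    have := hflb x hxI y hyIcc
    have hfXm := fXm_pos hG1 hxI
    have h1 : bγ * fXm fXY x ≤ fXY x y := by
      rw [condPDF2] at this
      exact (le_div_iff₀ hfXm).1 this
    have h2 : bγ * b ≤ bγ * fXm fXY x :=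
      mul_le_mul_of_nonneg_left (hG1.fXlb x hxI) hbγ.le
    linarith
  -- quantile gap
  have hgap : ∀ x ∈ C, ENNReal.ofReal (1/(2*M))
      ≤ volume {y : ℝ | (1/4 : ℝ) ≤ F x y ∧ F x y < 1 - 1/4} := by
    intro x hxC
    have hxI : x ∈ Set.Ioo s0 s1 := hCsub hxC
    obtain ⟨hq1, hq2, hq3, hq4⟩ := genInv_props hG1 hxI (t := 1/4) (by norm_num) (by norm_num)
    obtain ⟨hp1, hp2, hp3, hp4⟩ := genInv_props hG1 hxI (t := 1 - 1/4) (by norm_num) (by norm_num)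
    set q := genInv (fun z => condCDF2 fXY z x) (1/4)
    set qb := genInv (fun z => condCDF2 fXY z x) (1 - 1/4)
    have hmono := condCDF2_mono hG1 hxI
    have hqle : q ≤ qb := by
      by_contra hgt
      push_neg at hgt
      have : condCDF2 fXY qb x ≤ condCDF2 fXY q x := hmono hgt.le
      linarith
    have hlip := condCDF2_lipschitz hG1 hxI qb q
    have habs : |condCDF2 fXY qb x - condCDF2 fXY q x| ≥ 1/2 := by
      rw [abs_of_nonneg (by linarith [hmono hqle])]
      linarith
    have habs2 : |qb - q| = qb - q := abs_of_nonneg (by linarith)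
    rw [habs2] at hlip
    have hgapge : 1/(2*M) ≤ qb - q := by
      have h3 : (1:ℝ)/2 ≤ M * (qb - q) := le_trans habs hlip
      rw [div_le_iff₀ (by positivity : (0:ℝ) < 2*M)]
      nlinarith
    have hsub : Set.Ico q qb ⊆ {y : ℝ | (1/4 : ℝ) ≤ F x y ∧ F x y < 1 - 1/4} := by
      rintro y ⟨hy1, hy2⟩
      constructor
      · exact le_trans hq1 (hmono hy1)
      · by_contra hge
        push_neg at hge
        have := hp3 y hge
        linarith
    calc ENNReal.ofReal (1/(2*M)) ≤ ENNReal.ofReal (qb - q) :=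
          ENNReal.ofReal_le_ofReal hgapge
      _ = volume (Set.Ico q qb) := (Real.volume_Ico).symm
      _ ≤ volume {y : ℝ | (1/4 : ℝ) ≤ F x y ∧ F x y < 1 - 1/4} := measure_mono hsub
  -- measure chain
  have hRsub : R ⊆ C ×ˢ (Set.univ : Set ℝ) := fun p hp => ⟨hp.1, Set.mem_univ _⟩
  have hmap : P (X 0 ⁻¹' C)
      = Measure.map (fun ω => (X 0 ω, Y 0 ω)) P (C ×ˢ (Set.univ : Set ℝ)) := by
    rw [Measure.map_apply hpair (hC.prod MeasurableSet.univ)]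
    congr 1
    ext ω
    simp
  rw [hmap, hiid.law]
  have h1 : ENNReal.ofReal (bγ * b) * volume R
      ≤ (volume : Measure (ℝ × ℝ)).withDensity (fun p => ENNReal.ofReal (fXY p.1 p.2)) R := by
    rw [withDensity_apply _ hRmeas]
    have : ∀ᵐ p ∂(volume.restrict R), ENNReal.ofReal (bγ * b)
        ≤ ENNReal.ofReal (fXY p.1 p.2) := by
      rw [ae_restrict_iff' hRmeas]
      exact Filter.Eventually.of_forall fun p hp =>
        ENNReal.ofReal_le_ofReal (hdens p hp)
    calc ENNReal.ofReal (bγ * b) * volume R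
        = ∫⁻ _p in R, ENNReal.ofReal (bγ * b) ∂volume := (setLIntegral_const _ _).symm
      _ ≤ ∫⁻ p in R, ENNReal.ofReal (fXY p.1 p.2) ∂volume := lintegral_mono_ae this
  have h2 : ENNReal.ofReal (1/(2*M)) * volume C ≤ volume R := by
    have hvol : volume R = ∫⁻ x, volume {y : ℝ | (x, y) ∈ R} ∂volume := by
      rw [MeasureTheory.Measure.volume_eq_prod, Measure.prod_apply hRmeas]
      rfl
    rw [hvol]
    have hpt : ∀ x : ℝ, (C.indicator (fun _ => ENNReal.ofReal (1/(2*M))) x)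
        ≤ volume {y : ℝ | (x, y) ∈ R} := by
      intro x
      by_cases hxC : x ∈ C
      · rw [Set.indicator_of_mem hxC]
        have : {y : ℝ | (1/4 : ℝ) ≤ F x y ∧ F x y < 1 - 1/4}
            = {y : ℝ | (x, y) ∈ R} := by
          ext y; simp [hRdef, hxC]
        rw [← this]
        exact hgap x hxC
      · rw [Set.indicator_of_notMem hxC]; exact zero_le
    calc ENNReal.ofReal (1/(2*M)) * volume C
        = ∫⁻ x, C.indicator (fun _ => ENNReal.ofReal (1/(2*M))) x ∂volume := by
          rw [lintegral_indicator hC, setLIntegral_const]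
      _ ≤ ∫⁻ x, volume {y : ℝ | (x, y) ∈ R} ∂volume := lintegral_mono hpt
  have hmono2 : (volume : Measure (ℝ × ℝ)).withDensity
      (fun p => ENNReal.ofReal (fXY p.1 p.2)) R
      ≤ (volume : Measure (ℝ × ℝ)).withDensity
      (fun p => ENNReal.ofReal (fXY p.1 p.2)) (C ×ˢ (Set.univ : Set ℝ)) :=
    measure_mono hRsub
  calc ENNReal.ofReal (bγ * b * (1/(2*M))) * volume C
      = ENNReal.ofReal (bγ * b) * (ENNReal.ofReal (1/(2*M)) * volume C) := by
        rw [← mul_assoc, ← ENNReal.ofReal_mul (by positivity)]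
    _ ≤ ENNReal.ofReal (bγ * b) * volume R :=
        mul_le_mul_right h2 _
    _ ≤ _ := le_trans h1 hmono2

end Marg

section Count
variable {Ω : Type*} [MeasurableSpace Ω] {P : Measure Ω} [IsProbabilityMeasure P]
  {X Y : ℕ → Ω → ℝ} {fXY : ℝ → ℝ → ℝ}

lemma count_lb (hiid : IIDLaw2 P X Y fXY) (n : ℕ) (hn : 1 ≤ n)
    (cell : Set ℝ) (hcell : MeasurableSet cell) {p0 : ℝ} (hp0 : 0 < p0)
    (hplb : ENNReal.ofReal p0 ≤ P (X 0 ⁻¹' cell)) :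
    P {ω | (∑ i ∈ Finset.range n,
        (X i ⁻¹' cell).indicator (fun _ => (1:ℝ)) ω) < n * p0 / 2}
      ≤ ENNReal.ofReal (4 / (n * p0)) := by
  classical
  set W : ℕ → Ω → ℝ := fun i => (X i ⁻¹' cell).indicator (fun _ => (1:ℝ)) with hW
  have hsetm : ∀ i, MeasurableSet (X i ⁻¹' cell) := fun i => (hiid.measX i) hcell
  have hWmeas : ∀ i, Measurable (W i) := fun i =>
    measurable_const.indicator (hsetm i)
  have hWmem : ∀ i, MemLp (W i) 2 P := fun i =>
    memLp_indicator_const 2 (hsetm i) 1 (Or.inr (measure_ne_top _ _))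
  have hWint : ∀ i, Integrable (W i) P := fun i => (hWmem i).integrable one_le_two
  -- identical distribution of preimage masses
  have hpairm : ∀ i, Measurable (fun ω => (X i ω, Y i ω)) := fun i =>
    (hiid.measX i).prodMk (hiid.measY i)
  have hprodm : MeasurableSet (cell ×ˢ (Set.univ : Set ℝ)) :=
    hcell.prod MeasurableSet.univ
  have hmass : ∀ i, P (X i ⁻¹' cell) = P (X 0 ⁻¹' cell) := by
    intro i
    have h1 : P (X i ⁻¹' cell)
        = Measure.map (fun ω => (X i ω, Y i ω)) P (cell ×ˢ (Set.univ : Set ℝ)) := by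
      rw [Measure.map_apply (hpairm i) hprodm]
      congr 1; ext ω; simp
    have h2 : P (X 0 ⁻¹' cell)
        = Measure.map (fun ω => (X 0 ω, Y 0 ω)) P (cell ×ˢ (Set.univ : Set ℝ)) := by
      rw [Measure.map_apply (hpairm 0) hprodm]
      congr 1; ext ω; simp
    rw [h1, h2, (hiid.ident i).map_eq]
  set p : ℝ := (P (X 0 ⁻¹' cell)).toReal with hp
  have hpge : p0 ≤ p := (ENNReal.ofReal_le_iff_le_toReal (measure_ne_top _ _)).1 hplb
  have hppos : 0 < p := lt_of_lt_of_le hp0 hpge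
  have hEW : ∀ i, P[W i] = p := by
    intro i
    rw [hW]
    simp only []
    rw [integral_indicator_const (1:ℝ) (hsetm i)]
    simp [hmass i, hp, measureReal_def]
  -- variance of each W i
  have hWsq : ∀ i, W i ^ 2 = W i := by
    intro i
    funext ω
    by_cases h : ω ∈ X i ⁻¹' cell <;>
      simp [hW, Set.indicator_apply, h]
  have hVar : ∀ i, variance (W i) P ≤ p := by
    intro i
    rw [variance_eq_sub (hWmem i), hWsq i, hEW i]
    nlinarith [sq_nonneg p]
  -- independence of the W i
  have hWindep : iIndepFun W P := by
    have hcomp := hiid.indep.comp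
      (fun _ (q : ℝ × ℝ) => cell.indicator (fun _ => (1:ℝ)) q.1)
      (fun _ => (measurable_const.indicator hcell).comp measurable_fst)
    have : W = fun i => (fun q : ℝ × ℝ => cell.indicator (fun _ => (1:ℝ)) q.1)
        ∘ (fun ω => (X i ω, Y i ω)) := by
      funext i ω
      by_cases h : X i ω ∈ cell <;>
        simp [hW, Set.indicator_apply, h]
    rw [this]
    exact hcomp
  -- sum
  set N : Ω → ℝ := ∑ i ∈ Finset.range n, W i with hN
  have hNmem : MemLp N 2 P := memLp_finsetSum' _ (fun i _ => hWmem i)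
  have hEN : P[N] = n * p := by
    rw [hN]
    simp only [Finset.sum_apply]
    rw [integral_finset_sum _ (fun i _ => hWint i)]
    simp [hEW, Finset.sum_const]
  have hVarN : variance N P ≤ n * p := by
    rw [hN, IndepFun.variance_sum (fun i _ => hWmem i)
      (fun i _ j _ hij => hWindep.indepFun hij)]
    calc ∑ i ∈ Finset.range n, variance (W i) P ≤ ∑ _i ∈ Finset.range n, p :=
          Finset.sum_le_sum fun i _ => hVar i
      _ = n * p := by simp [Finset.sum_const, nsmul_eq_mul]
  -- Chebyshev
  have hc : (0:ℝ) < n * p / 2 := by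
    have : (1:ℝ) ≤ n := by exact_mod_cast hn
    nlinarith
  have hcheb := meas_ge_le_variance_div_sq (μ := P) hNmem hc
  have hsub : {ω | (∑ i ∈ Finset.range n, W i ω) < n * p0 / 2}
      ⊆ {ω | n * p / 2 ≤ |N ω - P[N]|} := by
    intro ω hω
    simp only [Set.mem_setOf_eq] at hω ⊢
    have hNω : N ω = ∑ i ∈ Finset.range n, W i ω := by
      rw [hN]; simp [Finset.sum_apply]
    have h1 : N ω < n * p0 / 2 := by rw [hNω]; exact hω
    have h2 : n * p0 / 2 ≤ n * p / 2 := by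
      have : (0:ℝ) ≤ n := Nat.cast_nonneg n
      nlinarith
    rw [hEN]
    rw [abs_sub_comm]
    rw [le_abs]
    left
    linarith
  calc P {ω | (∑ i ∈ Finset.range n, W i ω) < n * p0 / 2}
      ≤ P {ω | n * p / 2 ≤ |N ω - P[N]|} := measure_mono hsub
    _ ≤ ENNReal.ofReal (variance N P / (n * p / 2)^2) := hcheb
    _ ≤ ENNReal.ofReal (4 / (n * p0)) := by
        apply ENNReal.ofReal_le_ofReal
        have h1 : (1:ℝ) ≤ n := by exact_mod_cast hn
        have hnp : (0:ℝ) < n * p := by nlinarith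
        have hnp0 : (0:ℝ) < n * p0 := by nlinarith
        have hD : (0:ℝ) < (n*p/2)^2 := by positivity
        have hA : variance N P / (n * p / 2)^2 ≤ (n*p) / ((n*p/2)^2) :=
          div_le_div₀ hnp.le hVarN hD le_rfl
        have hB : (n*p) / ((n*p/2)^2) = 4/(n*p) := by field_simp; ring
        have hC : 4/(n*p) ≤ 4/(n*p0) := by
          apply div_le_div_of_nonneg_left (by norm_num) hnp0
          nlinarith
        rw [hB] at hA
        linarith
  
end Count

lemma nh2_tendsto (h1 : ℕ → ℝ) (hpos : ∀ n, 0 < h1 n) (hto0 : Tendsto h1 atTop (𝓝 0))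
    (hr1 : Tendsto (fun n : ℕ => (n:ℝ) * h1 n ^ 3 / |Real.log (h1 n)|) atTop atTop) :
    Tendsto (fun n : ℕ => (n:ℝ) * h1 n ^ 2) atTop atTop := by
  apply tendsto_atTop_mono' atTop ?_ hr1
  have hev : ∀ᶠ n in atTop, h1 n ≤ 1/2 :=
    hto0.eventually (eventually_le_nhds (by norm_num))
  filter_upwards [hev] with n hn
  have hp := hpos n
  have hlog : (1:ℝ)/2 ≤ |Real.log (h1 n)| := by
    have hlt1 : h1 n < 1 := by linarith
    have hneg : Real.log (h1 n) < 0 := Real.log_neg hp hlt1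
    rw [abs_of_neg hneg]
    have h2 : Real.log (h1 n) ≤ Real.log (1/2) := Real.log_le_log hp hn
    have h3 : Real.log (1/2 : ℝ) = - Real.log 2 := by rw [one_div, Real.log_inv]
    have hl2 : (1:ℝ)/2 ≤ Real.log 2 := by
      have := Real.log_two_gt_d9; linarith
    linarith
  have hnn : (0:ℝ) ≤ n := Nat.cast_nonneg n
  rw [div_le_iff₀ (by linarith : (0:ℝ) < |Real.log (h1 n)|)]
  have hle : h1 n ≤ |Real.log (h1 n)| := by linarith
  have h3 : (n:ℝ) * h1 n^2 * h1 n ≤ (n:ℝ) * h1 n^2 * |Real.log (h1 n)| :=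
    mul_le_mul_of_nonneg_left hle (by positivity)
  calc (n:ℝ) * h1 n^3 = (n:ℝ) * h1 n^2 * h1 n := by ring
    _ ≤ (n:ℝ) * h1 n^2 * |Real.log (h1 n)| := h3

lemma grid_cover {s0 s1 l : ℝ} (hl : 0 < l) (u : ℝ) (hu0 : s0 < u) (hu1 : u + 2*l < s1) :
    ∃ j : ℕ, j < ⌊(s1 - s0)/l⌋₊ ∧
      Set.Ioo (s0 + j*l) (s0 + (j+1)*l) ⊆ Set.Icc u (u + 2*l) := by
  set j := ⌈(u - s0)/l⌉₊ with hj
  have hnn : 0 ≤ (u - s0)/l := div_nonneg (by linarith) hl.le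
  have hup : ((u - s0)/l : ℝ) ≤ j := Nat.le_ceil _
  have hlow : (j:ℝ) < (u - s0)/l + 1 := Nat.ceil_lt_add_one hnn
  have hge : u ≤ s0 + j*l := by
    have := (div_le_iff₀ hl).1 hup
    linarith
  have h2 : (j:ℝ)*l < (u - s0) + l := by
    have h3 := mul_lt_mul_of_pos_right hlow hl
    rw [add_mul, div_mul_cancel₀ _ hl.ne', one_mul] at h3
    exact h3
  have hle : s0 + ((j:ℝ)+1)*l < u + 2*l := by nlinarith
  refine ⟨j, ?_, ?_⟩
  · have hj1 : ((j:ℝ)+1)*l < s1 - s0 := by linarith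
    have h4 : ((j+1 : ℕ):ℝ) ≤ (s1 - s0)/l := by
      rw [le_div_iff₀ hl]
      push_cast
      linarith
    have := Nat.le_floor h4
    omega
  · rintro y ⟨hy1, hy2⟩
    push_cast at hy2
    exact ⟨by linarith, by linarith⟩

set_option maxHeartbeats 3200000 in
/-- Lemma 1, first part: under (G1'), (G3), (G4'), there is a
constant `c > 0` (depending only on `K`) such that with probability tending to
one, `p̂_{n,0}(x) p̂_{n,2}(x) - p̂_{n,1}(x)² ≥ b² c` for all `x ∈ S_X`. -/
theorem stmt3
    {Ω : Type*} [MeasurableSpace Ω] (P : Measure Ω) [IsProbabilityMeasure P]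
    (X Y : ℕ → Ω → ℝ) (fXY : ℝ → ℝ → ℝ) (s0 s1 b M δ : ℝ)
    (hG1 : CondG1 fXY s0 s1 b M δ) (hiid : IIDLaw2 P X Y fXY)
    (K L : ℝ → ℝ) (hK : KernelCondK K) (hL : KernelCondL L)
    (h1 h2 : ℕ → ℝ) (hband : BandG4' h1 h2) :
    ∃ c > (0 : ℝ),
      Tendsto (fun n => P {ω | ∀ x ∈ Set.Ioo s0 s1,
          b ^ 2 * c ≤ phat K h1 X n 0 x ω * phat K h1 X n 2 x ω
              - (phat K h1 X n 1 x ω) ^ 2})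
        atTop (𝓝 1) := by
  classical
  obtain ⟨k0, hk0, c1, c2, hc1, hc12, hc2, hKlb⟩ :=
    kernel_pos_interval hK.1 hK.2.1.continuous
  obtain ⟨β, hβ, hmarg⟩ := marginal_lb hG1 hiid
  have hb := hG1.hb
  have hss := hG1.hs
  set ρ := (c2 - c1)/3 with hρdef
  have hρ : 0 < ρ := by rw [hρdef]; linarith
  set D0 := (β*ρ/4)^2 * k0^2 * ρ^2/2 with hD0def
  have hD0 : 0 < D0 := by positivity
  refine ⟨D0 / b^2, by positivity, ?_⟩
  have hbc : b^2 * (D0/b^2) = D0 := by field_simp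
  -- per-n objects
  set l : ℕ → ℝ := fun n => ρ * h1 n / 2 with hldef
  have hlpos : ∀ n, 0 < l n := fun n => by
    have := hband.pos1 n; rw [hldef]; positivity
  set Nn : ℕ → ℕ := fun n => ⌊(s1 - s0)/(l n)⌋₊ with hNdef
  set cell : ℕ → ℕ → Set ℝ :=
    fun n j => Set.Ioo (s0 + j*(l n)) (s0 + (j+1)*(l n)) with hcelldef
  set T : ℕ → ℝ := fun n => (n:ℝ) * (β * l n) / 2 with hTdef
  set cnt : ℕ → ℕ → Ω → ℝ := fun n j ω => ∑ i ∈ Finset.range n,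
      (X i ⁻¹' cell n j).indicator (fun _ => (1:ℝ)) ω with hcntdef
  set G : ℕ → Set Ω := fun n => {ω | ∀ j ∈ Finset.range (Nn n), T n ≤ cnt n j ω}
    with hGdef
  have hcellmeas : ∀ n j, MeasurableSet (cell n j) := fun n j => measurableSet_Ioo
  have hcntmeas : ∀ n j, Measurable (cnt n j) := by
    intro n j
    apply Finset.measurable_sum
    intro i _
    exact measurable_const.indicator ((hiid.measX i) (hcellmeas n j))
  have hGmeas : ∀ n, MeasurableSet (G n) := by
    intro n
    have : G n = ⋂ j ∈ Finset.range (Nn n), {ω | T n ≤ cnt n j ω} := by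
      ext ω; simp [hGdef, Set.mem_iInter]
    rw [this]
    exact MeasurableSet.biInter (Finset.range (Nn n)).countable_toSet
      (fun j _ => measurableSet_le measurable_const (hcntmeas n j))
  -- cells are inside (s0, s1) and have mass ≥ β * l n
  have hcellsub : ∀ n, ∀ j < Nn n, cell n j ⊆ Set.Ioo s0 s1 := by
    intro n j hj
    have hl := hlpos n
    have hfl : (Nn n : ℝ) ≤ (s1 - s0)/(l n) :=
      Nat.floor_le (div_nonneg (by linarith) hl.le)
    have h2 : (Nn n : ℝ) * l n ≤ s1 - s0 := by
      rw [← le_div_iff₀ hl]; exact hfl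
    have hj1 : ((j:ℝ)+1) ≤ (Nn n : ℝ) := by exact_mod_cast hj
    apply Set.Ioo_subset_Ioo
    · nlinarith [hl.le, (Nat.cast_nonneg j : (0:ℝ) ≤ j)]
    · nlinarith
  -- probability bound on the bad event, eventually
  have hA0 : (0:ℝ) < 16*(s1-s0)/(β*ρ^2) := by
    have hss' : (0:ℝ) < s1 - s0 := by linarith
    positivity
  set A0 := 16*(s1-s0)/(β*ρ^2) with hA0def
  have hcompl : ∀ᶠ n in atTop, P ((G n)ᶜ)
      ≤ ENNReal.ofReal (A0 / ((n:ℝ) * h1 n^2)) := by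
    filter_upwards [eventually_ge_atTop 1] with n hn
    have hl := hlpos n
    have hh := hband.pos1 n
    have hcup : (G n)ᶜ = ⋃ j ∈ Finset.range (Nn n), {ω | cnt n j ω < T n} := by
      ext ω
      constructor
      · intro hω
        simp only [Set.mem_compl_iff, hGdef, Set.mem_setOf_eq] at hω
        push_neg at hω
        obtain ⟨j, hj1, hj2⟩ := hω
        exact Set.mem_biUnion hj1 (by simpa [not_le] using hj2)
      · intro hω
        simp only [Set.mem_iUnion] at hω
        obtain ⟨j, hj1, hj2⟩ := hω
        simp only [Set.mem_compl_iff, hGdef, Set.mem_setOf_eq]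
        push_neg
        exact ⟨j, hj1, by simpa [not_le] using hj2⟩
    rw [hcup]
    calc P (⋃ j ∈ Finset.range (Nn n), {ω | cnt n j ω < T n})
        ≤ ∑ j ∈ Finset.range (Nn n), P {ω | cnt n j ω < T n} :=
          measure_biUnion_finset_le _ _
      _ ≤ ∑ _j ∈ Finset.range (Nn n), ENNReal.ofReal (4 / ((n:ℝ) * (β * l n))) := by
          apply Finset.sum_le_sum
          intro j hj
          have hjN : j < Nn n := Finset.mem_range.1 hj
          have hplb : ENNReal.ofReal (β * l n) ≤ P (X 0 ⁻¹' cell n j) := by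
            have := hmarg (cell n j) (hcellmeas n j) (hcellsub n j hjN)
            have hvol : volume (cell n j) = ENNReal.ofReal (l n) := by
              rw [hcelldef]
              simp only [Real.volume_Ioo]
              congr 1
              ring
            rw [hvol, ← ENNReal.ofReal_mul hβ.le] at this
            exact this
          have := count_lb hiid n hn (cell n j) (hcellmeas n j)
            (p0 := β * l n) (mul_pos hβ hl) hplb
          exact this
      _ = (Nn n : ENNReal) * ENNReal.ofReal (4 / ((n:ℝ) * (β * l n))) := by
          rw [Finset.sum_const, Finset.card_range, nsmul_eq_mul]
      _ ≤ ENNReal.ofReal ((s1-s0)/(l n)) * ENNReal.ofReal (4 / ((n:ℝ) * (β * l n))) := by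
          apply mul_le_mul_left
          rw [← ENNReal.ofReal_natCast (Nn n)]
          exact ENNReal.ofReal_le_ofReal
            (Nat.floor_le (div_nonneg (by linarith) hl.le))
      _ = ENNReal.ofReal ((s1-s0)/(l n) * (4 / ((n:ℝ) * (β * l n)))) :=
          (ENNReal.ofReal_mul (div_nonneg (by linarith) hl.le)).symm
      _ = ENNReal.ofReal (A0 / ((n:ℝ) * h1 n^2)) := by
          congr 1
          have hn0 : (0:ℝ) < n := by exact_mod_cast hn
          rw [hA0def, hldef]
          field_simp
          ring
  -- the bad-probability bound tends to zero
  have hv0 : Tendsto (fun n : ℕ => ENNReal.ofReal (A0 / ((n:ℝ) * h1 n^2)))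
      atTop (𝓝 0) := by
    have hNInf := nh2_tendsto h1 hband.pos1 hband.to0₁ hband.r1
    have hre : Tendsto (fun n : ℕ => A0 / ((n:ℝ) * h1 n^2)) atTop (𝓝 0) := by
      have := hNInf.inv_tendsto_atTop
      have h2 := this.const_mul A0
      rw [mul_zero] at h2
      simpa [div_eq_mul_inv] using h2
    have := ENNReal.tendsto_ofReal hre
    simpa using this
  -- inclusion of the good event in the target event, eventually
  have hincl : ∀ᶠ n in atTop, G n ⊆ {ω | ∀ x ∈ Set.Ioo s0 s1,
      b ^ 2 * (D0/b^2) ≤ phat K h1 X n 0 x ω * phat K h1 X n 2 x ω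
        - (phat K h1 X n 1 x ω) ^ 2} := by
    have hev2 : ∀ᶠ n in atTop, h1 n < (s1 - s0)/2 :=
      hband.to0₁.eventually (eventually_lt_nhds (by linarith))
    filter_upwards [eventually_ge_atTop 1, hev2] with n hn1 hhsmall
    intro ω hω x hx
    rw [hbc]
    have hh : 0 < h1 n := hband.pos1 n
    have hl := hlpos n
    have hn0 : (0:ℝ) < n := by exact_mod_cast hn1
    -- counting in a window [u, u+2l]
    have hcount : ∀ u : ℝ, s0 < u → u + 2*(l n) < s1 →
        ∃ A : Finset ℕ, A ⊆ Finset.range n ∧ T n ≤ (A.card:ℝ) ∧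
          ∀ i ∈ A, X i ω ∈ Set.Icc u (u + 2*(l n)) := by
      intro u hu0 hu1
      obtain ⟨j, hjN, hjsub⟩ := grid_cover hl u hu0 hu1
      refine ⟨(Finset.range n).filter (fun i => X i ω ∈ cell n j),
        Finset.filter_subset _ _, ?_, ?_⟩
      · have hcard : cnt n j ω
            = (((Finset.range n).filter (fun i => X i ω ∈ cell n j)).card : ℝ) := by
          rw [hcntdef]
          have : ∀ i, (X i ⁻¹' cell n j).indicator (fun _ => (1:ℝ)) ω
              = if X i ω ∈ cell n j then (1:ℝ) else 0 := by
            intro i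
            by_cases h : X i ω ∈ cell n j <;> simp [Set.indicator_apply, h]
          simp only [this]
          rw [Finset.sum_boole]
        rw [← hcard]
        exact hω j (Finset.mem_range.2 hjN)
      · intro i hi
        exact hjsub (Finset.mem_filter.1 hi).2
    -- set up the two windows depending on the side
    have hsum : c1 + ρ ≤ c2 - ρ := by rw [hρdef]; linarith
    have hTnn : 0 ≤ T n := by
      rw [hTdef]
      positivity
    obtain ⟨A, hAsub, hAcard, hAmem, B, hBsub, hBcard, hBmem, hsep⟩ :
        ∃ A : Finset ℕ, A ⊆ Finset.range n ∧ T n ≤ (A.card:ℝ) ∧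
          (∀ i ∈ A, |(x - X i ω)/h1 n| ∈ Set.Icc c1 c2) ∧
        ∃ B : Finset ℕ, B ⊆ Finset.range n ∧ T n ≤ (B.card:ℝ) ∧
          (∀ i ∈ B, |(x - X i ω)/h1 n| ∈ Set.Icc c1 c2) ∧
          (∀ i ∈ A, ∀ j ∈ B, ρ ≤ |(x - X i ω)/h1 n - (x - X j ω)/h1 n|) := by
      have h2l : 2 * l n = ρ * h1 n := by rw [hldef]; ring
      have hch : (c1+ρ)*h1 n ≤ c2*h1 n := by
        apply mul_le_mul_of_nonneg_right _ hh.le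
        linarith
      have hc2h : c2*h1 n < (s1-s0)/2 := by
        have h9 : c2*h1 n ≤ 1*h1 n :=
          mul_le_mul_of_nonneg_right hc2.le hh.le
        rw [one_mul] at h9
        linarith
      have hc1h : 0 < c1*h1 n := mul_pos hc1 hh
      have hρh : 0 < ρ*h1 n := mul_pos hρ hh
      have hc2ρ : 0 < (c2-ρ)*h1 n := mul_pos (by linarith) hh
      by_cases hside : (s0+s1)/2 ≤ x
      · -- windows to the left of x
        obtain ⟨A, hA1, hA2, hA3⟩ := hcount (x - (c1+ρ)*h1 n)
          (by linarith [hch, hc2h]) (by rw [h2l]; linarith [hc1h, hx.2])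
        obtain ⟨B, hB1, hB2, hB3⟩ := hcount (x - c2*h1 n)
          (by linarith [hc2h]) (by rw [h2l]; linarith [hc2ρ, hx.2])
        have huA : ∀ i ∈ A, c1 ≤ (x - X i ω)/h1 n ∧ (x - X i ω)/h1 n ≤ c1 + ρ := by
          intro i hi
          obtain ⟨hm1, hm2⟩ := hA3 i hi
          rw [h2l] at hm2
          constructor
          · rw [le_div_iff₀ hh]; linarith
          · rw [div_le_iff₀ hh]; linarith
        have huB : ∀ i ∈ B, c2 - ρ ≤ (x - X i ω)/h1 n ∧ (x - X i ω)/h1 n ≤ c2 := by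
          intro i hi
          obtain ⟨hm1, hm2⟩ := hB3 i hi
          rw [h2l] at hm2
          constructor
          · rw [le_div_iff₀ hh]; linarith
          · rw [div_le_iff₀ hh]; linarith
        refine ⟨A, hA1, hA2, ?_, B, hB1, hB2, ?_, ?_⟩
        · intro i hi
          obtain ⟨hm1, hm2⟩ := huA i hi
          rw [abs_of_nonneg (by linarith)]
          exact ⟨hm1, by linarith⟩
        · intro i hi
          obtain ⟨hm1, hm2⟩ := huB i hi
          rw [abs_of_nonneg (by linarith)]
          exact ⟨by linarith, hm2⟩
        · intro i hi j hj
          obtain ⟨hi1, hi2⟩ := huA i hi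
          obtain ⟨hj1, hj2⟩ := huB j hj
          rw [abs_sub_comm, abs_of_nonneg (by linarith)]
          linarith
      · -- windows to the right of x
        push_neg at hside
        obtain ⟨A, hA1, hA2, hA3⟩ := hcount (x + c1*h1 n)
          (by linarith [hc1h, hx.1]) (by rw [h2l]; linarith [hch, hc2h])
        obtain ⟨B, hB1, hB2, hB3⟩ := hcount (x + (c2-ρ)*h1 n)
          (by linarith [hc2ρ, hx.1]) (by rw [h2l]; linarith [hc2h])
        have huA : ∀ i ∈ A, -(c1+ρ) ≤ (x - X i ω)/h1 n ∧ (x - X i ω)/h1 n ≤ -c1 := by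
          intro i hi
          obtain ⟨hm1, hm2⟩ := hA3 i hi
          rw [h2l] at hm2
          constructor
          · rw [le_div_iff₀ hh]; linarith
          · rw [div_le_iff₀ hh]; linarith
        have huB : ∀ i ∈ B, -c2 ≤ (x - X i ω)/h1 n ∧ (x - X i ω)/h1 n ≤ -(c2-ρ) := by
          intro i hi
          obtain ⟨hm1, hm2⟩ := hB3 i hi
          rw [h2l] at hm2
          constructor
          · rw [le_div_iff₀ hh]; linarith
          · rw [div_le_iff₀ hh]; linarith
        refine ⟨A, hA1, hA2, ?_, B, hB1, hB2, ?_, ?_⟩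
        · intro i hi
          obtain ⟨hm1, hm2⟩ := huA i hi
          rw [abs_of_nonpos (by linarith)]
          constructor <;> linarith
        · intro i hi
          obtain ⟨hm1, hm2⟩ := huB i hi
          rw [abs_of_nonpos (by linarith)]
          constructor <;> linarith
        · intro i hi j hj
          obtain ⟨hi1, hi2⟩ := huA i hi
          obtain ⟨hj1, hj2⟩ := huB j hj
          rw [abs_of_nonneg (by linarith)]
          linarith
    -- apply the deterministic lower bound
    set uu : ℕ → ℝ := fun i => (x - X i ω)/h1 n with huudef
    set aa : ℕ → ℝ := fun i => K (uu i) with haadef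
    have haa : ∀ i, 0 ≤ aa i := fun i => hK.1.2.1 _
    have hdet := det_sum_lb n aa uu haa A B hAsub hBsub k0 ρ hk0.le hρ.le
      (fun i hi => hKlb _ (hAmem i hi)) (fun j hj => hKlb _ (hBmem j hj))
      hsep
    -- identify the phat quantities
    have e0 : phat K h1 X n 0 x ω = (n:ℝ)⁻¹ * ((h1 n)⁻¹ * ∑ i ∈ Finset.range n, aa i) := by
      rw [phat]
      congr 1
      rw [Finset.mul_sum]
      refine Finset.sum_congr rfl fun i _ => ?_
      simp [wk, haadef, huudef]
    have e1 : phat K h1 X n 1 x ω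
        = (n:ℝ)⁻¹ * ((h1 n)⁻¹ * ∑ i ∈ Finset.range n, uu i * aa i) := by
      rw [phat]
      congr 1
      rw [Finset.mul_sum]
      refine Finset.sum_congr rfl fun i _ => ?_
      simp [wk, haadef, huudef]
    have e2 : phat K h1 X n 2 x ω
        = (n:ℝ)⁻¹ * ((h1 n)⁻¹ * ∑ i ∈ Finset.range n, (uu i)^2 * aa i) := by
      rw [phat]
      congr 1
      rw [Finset.mul_sum]
      refine Finset.sum_congr rfl fun i _ => ?_
      simp [wk, haadef, huudef]
    have hTT : T n * T n * (k0^2*ρ^2)/2 ≤ (A.card:ℝ) * B.card * (k0^2*ρ^2)/2 := by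
      have h1' : T n * T n ≤ (A.card:ℝ) * B.card :=
        mul_le_mul hAcard hBcard hTnn (Nat.cast_nonneg _)
      have hkr : (0:ℝ) ≤ k0^2*ρ^2 := by positivity
      nlinarith
    have hfinal : phat K h1 X n 0 x ω * phat K h1 X n 2 x ω
        - (phat K h1 X n 1 x ω)^2
        = ((n:ℝ)⁻¹ * (h1 n)⁻¹)^2 *
          ((∑ i ∈ Finset.range n, aa i) * (∑ i ∈ Finset.range n, (uu i)^2 * aa i)
            - (∑ i ∈ Finset.range n, uu i * aa i)^2) := by
      rw [e0, e1, e2]; ring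
    rw [hfinal]
    have hmono : ((n:ℝ)⁻¹ * (h1 n)⁻¹)^2 * (T n * T n * (k0^2*ρ^2)/2)
        ≤ ((n:ℝ)⁻¹ * (h1 n)⁻¹)^2 *
          ((∑ i ∈ Finset.range n, aa i) * (∑ i ∈ Finset.range n, (uu i)^2 * aa i)
            - (∑ i ∈ Finset.range n, uu i * aa i)^2) := by
      apply mul_le_mul_of_nonneg_left _ (by positivity)
      exact le_trans hTT hdet
    have hid : ((n:ℝ)⁻¹ * (h1 n)⁻¹)^2 * (T n * T n * (k0^2*ρ^2)/2) = D0 := by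
      rw [hTdef, hldef, hD0def]
      field_simp
      ring
    rw [← hid]
    exact hmono
  -- final squeeze
  have hup : ∀ n : ℕ, P {ω | ∀ x ∈ Set.Ioo s0 s1,
      b ^ 2 * (D0/b^2) ≤ phat K h1 X n 0 x ω * phat K h1 X n 2 x ω
        - (phat K h1 X n 1 x ω) ^ 2} ≤ 1 := fun n => prob_le_one
  have hlowev : ∀ᶠ n : ℕ in atTop, 1 - ENNReal.ofReal (A0 / ((n:ℝ) * h1 n^2))
      ≤ P {ω | ∀ x ∈ Set.Ioo s0 s1,
        b ^ 2 * (D0/b^2) ≤ phat K h1 X n 0 x ω * phat K h1 X n 2 x ω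
          - (phat K h1 X n 1 x ω) ^ 2} := by
    filter_upwards [hcompl, hincl] with n h1n h2n
    have hPG : P (G n) = 1 - P ((G n)ᶜ) := by
      have := prob_compl_eq_one_sub (μ := P) (hGmeas n).compl
      rw [compl_compl] at this
      rw [this]
    calc 1 - ENNReal.ofReal (A0 / ((n:ℝ) * h1 n^2))
        ≤ 1 - P ((G n)ᶜ) := tsub_le_tsub_left h1n 1
      _ = P (G n) := hPG.symm
      _ ≤ _ := measure_mono h2n
  have hlowtend : Tendsto (fun n : ℕ => 1 - ENNReal.ofReal (A0 / ((n:ℝ) * h1 n^2)))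
      atTop (𝓝 1) := by
    have := ENNReal.Tendsto.sub (tendsto_const_nhds (x := (1:ENNReal))) hv0
      (Or.inl ENNReal.one_ne_top)
    simpa using this
  exact tendsto_of_tendsto_of_tendsto_of_le_of_le' hlowtend tendsto_const_nhds
    hlowev (Filter.Eventually.of_forall hup)
end
end

section
/- Let C : [0,1]² → ℝ be continuous on [0,1]² and twice continuously differentiable on the open square (0,1)², and suppose there exists κ > 0 such that for all u = (u_1,u_2) ∈ (0,1)² and all j, k ∈ {1,2}, |∂²C/∂u_j∂u_k (u)| ≤ κ {u_j(1−u_j) u_k(1−u_k)}^{−1/2}. Then for every γ ∈ (0,1/2), every u ∈ [γ, 1−γ]² and every v ∈ [0,1]², | C(v) − C(u) − Σ_{j=1}^{2} (v_j − u_j) ∂C/∂u_j (u) | ≤ (4κ/γ) Σ_{j=1}^{2} (v_j − u_j)². -/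
open Set

noncomputable section

/-- Standard basis of `ℝ²`. -/
def bas2 : Fin 2 → ℝ × ℝ := ![((1 : ℝ), (0 : ℝ)), ((0 : ℝ), (1 : ℝ))]

/-- Coordinates of a point of `ℝ²`. -/
def coord2 (p : ℝ × ℝ) : Fin 2 → ℝ := ![p.1, p.2]

set_option maxHeartbeats 1000000

lemma aux_coord {γ t x y : ℝ} (hγ0 : 0 < γ) (hγ2 : γ < 1/2) (ht0 : 0 ≤ t) (ht1 : t < 1)
    (hx1 : γ ≤ x) (hx2 : x ≤ 1 - γ) (hy0 : 0 ≤ y) (hy1 : y ≤ 1) :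
    0 < x + t * (y - x) ∧ x + t * (y - x) < 1 ∧
      (1 - t) * γ / 2 ≤ (x + t * (y - x)) * (1 - (x + t * (y - x))) := by
  set a := x + t * (y - x) with ha
  set m := (1 - t) * γ with hm
  have h1 : m ≤ a := by rw [hm, ha]; nlinarith
  have h2 : a ≤ 1 - m := by rw [hm, ha]; nlinarith
  have hg : 0 < m := by rw [hm]; nlinarith
  have hg2 : m ≤ 1 / 2 := by rw [hm]; nlinarith
  refine ⟨by linarith, by linarith, ?_⟩
  have key : 0 ≤ (a - m) * (1 - m - a) := mul_nonneg (by linarith) (by linarith)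
  calc m / 2 ≤ m - m ^ 2 := by nlinarith
    _ ≤ a * (1 - a) := by nlinarith

lemma aux_bilin {a b x00 x01 x10 x11 K : ℝ} (hK : 0 ≤ K) (h00 : |x00| ≤ K)
    (h01 : |x01| ≤ K) (h10 : |x10| ≤ K) (h11 : |x11| ≤ K) :
    |a * (a * x00 + b * x01) + b * (a * x10 + b * x11)| ≤ 2 * (a ^ 2 + b ^ 2) * K := by
  have h1 : |a * x00 + b * x01| ≤ |a| * K + |b| * K := by
    refine (abs_add_le _ _).trans ?_
    rw [abs_mul, abs_mul]
    have := abs_nonneg a; have := abs_nonneg b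
    nlinarith
  have h2 : |a * x10 + b * x11| ≤ |a| * K + |b| * K := by
    refine (abs_add_le _ _).trans ?_
    rw [abs_mul, abs_mul]
    have := abs_nonneg a; have := abs_nonneg b
    nlinarith
  calc |a * (a * x00 + b * x01) + b * (a * x10 + b * x11)|
      ≤ |a| * |a * x00 + b * x01| + |b| * |a * x10 + b * x11| := by
        refine (abs_add_le _ _).trans ?_
        rw [abs_mul, abs_mul]
    _ ≤ |a| * (|a| * K + |b| * K) + |b| * (|a| * K + |b| * K) := by
        have := abs_nonneg a; have := abs_nonneg b
        nlinarith
    _ ≤ 2 * (a ^ 2 + b ^ 2) * K := by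
        nlinarith [sq_abs a, sq_abs b, sq_nonneg (|a| - |b|), abs_nonneg a, abs_nonneg b]

lemma aux_exp1 (L : ℝ × ℝ →L[ℝ] ℝ) (a b : ℝ) :
    L (a, b) = a * L ((1:ℝ), (0:ℝ)) + b * L ((0:ℝ), (1:ℝ)) := by
  have hx : ((a, b) : ℝ × ℝ) = a • ((1:ℝ), (0:ℝ)) + b • ((0:ℝ), (1:ℝ)) := by
    ext <;> simp
  rw [hx, map_add, map_smul, map_smul, smul_eq_mul, smul_eq_mul]

lemma aux_exp2 (B2 : ℝ × ℝ →L[ℝ] ℝ × ℝ →L[ℝ] ℝ) (a b : ℝ) :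
    B2 (a, b) (a, b) = a * (a * B2 ((1:ℝ),(0:ℝ)) ((1:ℝ),(0:ℝ)) + b * B2 ((1:ℝ),(0:ℝ)) ((0:ℝ),(1:ℝ))) +
      b * (a * B2 ((0:ℝ),(1:ℝ)) ((1:ℝ),(0:ℝ)) + b * B2 ((0:ℝ),(1:ℝ)) ((0:ℝ),(1:ℝ))) := by
  have hx : ((a, b) : ℝ × ℝ) = a • ((1:ℝ), (0:ℝ)) + b • ((0:ℝ), (1:ℝ)) := by
    ext <;> simp
  rw [hx, map_add, map_smul, map_smul]
  simp only [ContinuousLinearMap.add_apply, ContinuousLinearMap.coe_smul', Pi.smul_apply,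
    map_add, map_smul, smul_eq_mul]
  ring

lemma aux_mvt {φ φ' φ'' : ℝ → ℝ} {M γ : ℝ} (hγ : 0 < γ) (hM : 0 ≤ M)
    (hA : ∀ t ∈ Ico (0:ℝ) 1, HasDerivAt φ (φ' t) t)
    (hB : ∀ t ∈ Ico (0:ℝ) 1, HasDerivAt φ' (φ'' t) t)
    (hb : ∀ t ∈ Ico (0:ℝ) 1, |φ'' t| ≤ M / ((1 - t) * γ))
    {τ : ℝ} (hτ : τ ∈ Ioo (0:ℝ) 1) :
    |φ τ - φ 0 - τ * φ' 0| ≤ M / γ := by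
  obtain ⟨hτ0, hτ1⟩ := hτ
  set g : ℝ → ℝ := fun t => φ τ - φ t - (τ - t) * φ' t with hg
  have hsub : Icc (0:ℝ) τ ⊆ Ico (0:ℝ) 1 := fun x hx => ⟨hx.1, lt_of_le_of_lt hx.2 hτ1⟩
  have hgd : ∀ x ∈ Icc (0:ℝ) τ, HasDerivAt g (-((τ - x) * φ'' x)) x := by
    intro x hx
    have hx' := hsub hx
    have h3 : HasDerivAt (fun t => (τ - t) * φ' t) (-1 * φ' x + (τ - x) * φ'' x) x :=
      (((hasDerivAt_id x).const_sub τ)).mul (hB x hx')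
    have h4 := ((hasDerivAt_const x (φ τ)).sub (hA x hx')).sub h3
    exact h4.congr_deriv (by ring)
  have hcont : ContinuousOn g (Icc 0 τ) :=
    fun x hx => (hgd x hx).continuousAt.continuousWithinAt
  obtain ⟨c, hc, hceq⟩ := exists_hasDerivAt_eq_slope g (fun x => -((τ - x) * φ'' x)) hτ0
    hcont (fun x hx => hgd x ⟨hx.1.le, hx.2.le⟩)
  have hgτ : g τ = 0 := by simp [hg]
  have hg0 : g 0 = φ τ - φ 0 - τ * φ' 0 := by simp [hg]
  rw [hgτ] at hceq
  have hgval : g 0 = τ * ((τ - c) * φ'' c) := by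
    field_simp at hceq
    linarith
  have hc0 := hc.1
  have hcτ := hc.2
  have hbc := hb c (hsub ⟨hc0.le, hcτ.le⟩)
  have h1c : 0 < 1 - c := by linarith
  rw [← hg0, hgval, abs_mul, abs_mul]
  rw [abs_of_nonneg hτ0.le, abs_of_nonneg (by linarith : (0:ℝ) ≤ τ - c)]
  calc τ * ((τ - c) * |φ'' c|) ≤ 1 * ((τ - c) * (M / ((1 - c) * γ))) := by
        have h5 : (τ - c) * |φ'' c| ≤ (τ - c) * (M / ((1 - c) * γ)) := by
          apply mul_le_mul_of_nonneg_left hbc (by linarith)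
        have h6 : 0 ≤ (τ - c) * (M / ((1 - c) * γ)) :=
          mul_nonneg (by linarith) (div_nonneg hM (le_of_lt (mul_pos h1c hγ)))
        nlinarith
    _ ≤ M / γ := by
        rw [one_mul, mul_div_assoc']
        rw [div_le_div_iff₀ (mul_pos h1c hγ) hγ]
        nlinarith [mul_nonneg (mul_nonneg hM hγ.le) (by linarith : (0:ℝ) ≤ 1 - τ)]

/-- Lemma 2: a second-order Taylor-type bound for a
function `C` on `[0,1]²`, twice continuously differentiable on `(0,1)²` with
second-order partial derivatives bounded by
`κ (u_j(1-u_j)u_k(1-u_k))^{-1/2}`. -/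
theorem stmt12 (C : ℝ × ℝ → ℝ) (κ : ℝ) (hκ : 0 < κ)
    (hCcont : ContinuousOn C (Set.Icc 0 1 ×ˢ Set.Icc 0 1))
    (hC2 : ContDiffOn ℝ 2 C (Set.Ioo 0 1 ×ˢ Set.Ioo 0 1))
    (hbound : ∀ p ∈ Set.Ioo (0 : ℝ) 1 ×ˢ Set.Ioo (0 : ℝ) 1, ∀ j k : Fin 2,
      |fderiv ℝ (fun q => fderiv ℝ C q (bas2 j)) p (bas2 k)| ≤
        κ / Real.sqrt (coord2 p j * (1 - coord2 p j) * (coord2 p k * (1 - coord2 p k)))) :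
    ∀ γ ∈ Set.Ioo (0 : ℝ) (1 / 2),
      ∀ u ∈ Set.Icc γ (1 - γ) ×ˢ Set.Icc γ (1 - γ),
        ∀ v ∈ Set.Icc (0 : ℝ) 1 ×ˢ Set.Icc (0 : ℝ) 1,
          |C v - C u -
              ((v.1 - u.1) * fderiv ℝ C u ((1 : ℝ), (0 : ℝ)) +
                (v.2 - u.2) * fderiv ℝ C u ((0 : ℝ), (1 : ℝ)))| ≤
            4 * κ / γ * ((v.1 - u.1) ^ 2 + (v.2 - u.2) ^ 2) := by
  intro γ hγ u hu v hv
  obtain ⟨hγ0, hγ2⟩ := hγ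
  obtain ⟨⟨hu11, hu12⟩, hu21, hu22⟩ := hu
  obtain ⟨⟨hv11, hv12⟩, hv21, hv22⟩ := hv
  set O : Set (ℝ × ℝ) := Set.Ioo (0 : ℝ) 1 ×ˢ Set.Ioo (0 : ℝ) 1 with hO
  have hOopen : IsOpen O := isOpen_Ioo.prod isOpen_Ioo
  set d : ℝ × ℝ := v - u with hdd
  have hd1 : d.1 = v.1 - u.1 := rfl
  have hd2 : d.2 = v.2 - u.2 := rfl
  set S : ℝ := d.1 ^ 2 + d.2 ^ 2 with hS
  have hS0 : 0 ≤ S := by positivity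
  set w : ℝ → ℝ × ℝ := fun t => u + t • d with hw
  have hw1 : ∀ t, (w t).1 = u.1 + t * d.1 := fun t => rfl
  have hw2 : ∀ t, (w t).2 = u.2 + t * d.2 := fun t => rfl
  have hwmem : ∀ t ∈ Set.Ico (0 : ℝ) 1, w t ∈ O := by
    intro t ht
    have h1 := aux_coord hγ0 hγ2 ht.1 ht.2 hu11 hu12 hv11 hv12
    have h2 := aux_coord hγ0 hγ2 ht.1 ht.2 hu21 hu22 hv21 hv22
    exact ⟨⟨by rw [hw1, hd1]; exact h1.1, by rw [hw1, hd1]; exact h1.2.1⟩,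
      by rw [hw2, hd2]; exact h2.1, by rw [hw2, hd2]; exact h2.2.1⟩
  have hwprod : ∀ t ∈ Set.Ico (0 : ℝ) 1,
      (1 - t) * γ / 2 ≤ (w t).1 * (1 - (w t).1) ∧
      (1 - t) * γ / 2 ≤ (w t).2 * (1 - (w t).2) := by
    intro t ht
    have h1 := aux_coord hγ0 hγ2 ht.1 ht.2 hu11 hu12 hv11 hv12
    have h2 := aux_coord hγ0 hγ2 ht.1 ht.2 hu21 hu22 hv21 hv22
    exact ⟨by rw [hw1, hd1]; exact h1.2.2, by rw [hw2, hd2]; exact h2.2.2⟩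
  -- differentiability facts
  have hCd : ∀ p ∈ O, DifferentiableAt ℝ C p := fun p hp =>
    (hC2.contDiffAt (hOopen.mem_nhds hp)).differentiableAt (by norm_num)
  have hC1d : ∀ p ∈ O, DifferentiableAt ℝ (fderiv ℝ C) p := by
    intro p hp
    have h := (hC2.contDiffAt (hOopen.mem_nhds hp)).fderiv_right (m := 1) (by norm_num)
    exact h.differentiableAt (by norm_num)
  have hwderiv : ∀ t : ℝ, HasDerivAt w d t := by
    intro t
    have h : HasDerivAt (fun s : ℝ => s • d) ((1 : ℝ) • d) t := (hasDerivAt_id t).smul_const d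
    have h' : HasDerivAt (fun s : ℝ => s • d) d t := by simpa using h
    exact h'.const_add u
  set φ : ℝ → ℝ := fun t => C (w t) with hφ
  set φ' : ℝ → ℝ := fun t => fderiv ℝ C (w t) d with hφ'
  set φ'' : ℝ → ℝ := fun t => fderiv ℝ (fun q => fderiv ℝ C q d) (w t) d with hφ''
  have hA : ∀ t ∈ Set.Ico (0 : ℝ) 1, HasDerivAt φ (φ' t) t := fun t ht =>
    (hCd _ (hwmem t ht)).hasFDerivAt.comp_hasDerivAt t (hwderiv t)
  have hFd : ∀ p ∈ O, ∀ e : ℝ × ℝ, DifferentiableAt ℝ (fun q => fderiv ℝ C q e) p :=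
    fun p hp e => (hC1d p hp).clm_apply (differentiableAt_const e)
  have hB : ∀ t ∈ Set.Ico (0 : ℝ) 1, HasDerivAt φ' (φ'' t) t := fun t ht =>
    (hFd _ (hwmem t ht) d).hasFDerivAt.comp_hasDerivAt t (hwderiv t)
  have hrepr : ∀ p ∈ O, ∀ e e' : ℝ × ℝ,
      fderiv ℝ (fun q => fderiv ℝ C q e) p e' = fderiv ℝ (fderiv ℝ C) p e' e := by
    intro p hp e e'
    rw [fderiv_clm_apply (hC1d p hp) (differentiableAt_const e)]
    simp
  have hdsum : d = d.1 • ((1:ℝ), (0:ℝ)) + d.2 • ((0:ℝ), (1:ℝ)) := by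
    ext <;> simp
  -- bound on φ''
  have hφ''b : ∀ t ∈ Set.Ico (0 : ℝ) 1, |φ'' t| ≤ 4 * κ * S / ((1 - t) * γ) := by
    intro t ht
    have hp := hwmem t ht
    have h1t : 0 < 1 - t := by linarith [ht.2]
    set B2 := fderiv ℝ (fderiv ℝ C) (w t) with hB2
    set K := 2 * κ / ((1 - t) * γ) with hK
    have hK0 : 0 ≤ K := by positivity
    have hbb : ∀ j k : Fin 2, |B2 (bas2 k) (bas2 j)| ≤ K := by
      intro j k
      have h1 := hbound (w t) hp j k
      rw [hrepr (w t) hp (bas2 j) (bas2 k)] at h1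
      refine h1.trans ?_
      have hm2 : (0:ℝ) < (1 - t) * γ / 2 := by positivity
      have hj : (1 - t) * γ / 2 ≤ coord2 (w t) j * (1 - coord2 (w t) j) := by
        fin_cases j
        · simpa [coord2] using (hwprod t ht).1
        · simpa [coord2] using (hwprod t ht).2
      have hk : (1 - t) * γ / 2 ≤ coord2 (w t) k * (1 - coord2 (w t) k) := by
        fin_cases k
        · simpa [coord2] using (hwprod t ht).1
        · simpa [coord2] using (hwprod t ht).2
      have hsq : (1 - t) * γ / 2 ≤
          Real.sqrt (coord2 (w t) j * (1 - coord2 (w t) j) *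
            (coord2 (w t) k * (1 - coord2 (w t) k))) := by
        have h3 : ((1 - t) * γ / 2) * ((1 - t) * γ / 2) ≤
            coord2 (w t) j * (1 - coord2 (w t) j) * (coord2 (w t) k * (1 - coord2 (w t) k)) :=
          mul_le_mul hj hk hm2.le (by linarith)
        calc (1 - t) * γ / 2 = Real.sqrt (((1 - t) * γ / 2) * ((1 - t) * γ / 2)) :=
              (Real.sqrt_mul_self hm2.le).symm
          _ ≤ _ := Real.sqrt_le_sqrt h3
      calc κ / Real.sqrt _ ≤ κ / ((1 - t) * γ / 2) :=
            div_le_div_of_nonneg_left hκ.le hm2 hsq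
        _ = K := by rw [hK]; field_simp
    have hexp : φ'' t = d.1 * (d.1 * B2 ((1:ℝ),(0:ℝ)) ((1:ℝ),(0:ℝ)) +
        d.2 * B2 ((1:ℝ),(0:ℝ)) ((0:ℝ),(1:ℝ))) +
        d.2 * (d.1 * B2 ((0:ℝ),(1:ℝ)) ((1:ℝ),(0:ℝ)) +
        d.2 * B2 ((0:ℝ),(1:ℝ)) ((0:ℝ),(1:ℝ))) := by
      have hstep : φ'' t = B2 d d := hrepr (w t) hp d d
      have hexp2 : B2 d d = _ := aux_exp2 B2 d.1 d.2
      rw [hstep, hexp2]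
    have h00 : |B2 ((1:ℝ),(0:ℝ)) ((1:ℝ),(0:ℝ))| ≤ K := by simpa [bas2] using hbb 0 0
    have h01 : |B2 ((1:ℝ),(0:ℝ)) ((0:ℝ),(1:ℝ))| ≤ K := by simpa [bas2] using hbb 1 0
    have h10 : |B2 ((0:ℝ),(1:ℝ)) ((1:ℝ),(0:ℝ))| ≤ K := by simpa [bas2] using hbb 0 1
    have h11 : |B2 ((0:ℝ),(1:ℝ)) ((0:ℝ),(1:ℝ))| ≤ K := by simpa [bas2] using hbb 1 1
    rw [hexp]
    calc _ ≤ 2 * (d.1 ^ 2 + d.2 ^ 2) * K := aux_bilin hK0 h00 h01 h10 h11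
      _ = 4 * κ * S / ((1 - t) * γ) := by rw [hK, hS]; field_simp; ring
  -- Taylor bound on (0,1)
  have hM0 : 0 ≤ 4 * κ * S := by positivity
  have key : ∀ τ ∈ Set.Ioo (0 : ℝ) 1, |φ τ - φ 0 - τ * φ' 0| ≤ 4 * κ * S / γ :=
    fun τ hτ => aux_mvt hγ0 hM0 hA hB hφ''b hτ
  -- limit as τ → 1
  have hw1v : w 1 = v := by rw [hw]; simp [hdd]
  have hwcont : Continuous w := by
    rw [hw]; exact continuous_const.add (continuous_id.smul continuous_const)
  have hOsub : O ⊆ Set.Icc 0 1 ×ˢ Set.Icc 0 1 := fun p hp =>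
    ⟨⟨hp.1.1.le, hp.1.2.le⟩, hp.2.1.le, hp.2.2.le⟩
  have hvmem : v ∈ Set.Icc (0:ℝ) 1 ×ˢ Set.Icc (0:ℝ) 1 := ⟨⟨hv11, hv12⟩, hv21, hv22⟩
  have htend : Filter.Tendsto φ (nhdsWithin 1 (Set.Ioo (0:ℝ) 1)) (nhds (C v)) := by
    have h1 : Filter.Tendsto w (nhdsWithin 1 (Set.Ioo (0:ℝ) 1))
        (nhdsWithin v (Set.Icc 0 1 ×ˢ Set.Icc 0 1)) := by
      rw [tendsto_nhdsWithin_iff]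
      constructor
      · rw [← hw1v]
        exact (hwcont.tendsto 1).mono_left nhdsWithin_le_nhds
      · filter_upwards [self_mem_nhdsWithin] with x hx
        exact hOsub (hwmem x ⟨hx.1.le, hx.2⟩)
    exact ((hCcont v hvmem).tendsto.comp h1)
  have hne : (nhdsWithin (1:ℝ) (Set.Ioo (0:ℝ) 1)).NeBot := by
    apply mem_closure_iff_nhdsWithin_neBot.mp
    rw [closure_Ioo (by norm_num : (0:ℝ) ≠ 1)]
    exact ⟨by norm_num, le_refl 1⟩
  have htendR : Filter.Tendsto (fun τ => |φ τ - φ 0 - τ * φ' 0|)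
      (nhdsWithin 1 (Set.Ioo (0:ℝ) 1)) (nhds (|C v - φ 0 - 1 * φ' 0|)) := by
    apply Filter.Tendsto.abs
    apply Filter.Tendsto.sub
    · exact htend.sub tendsto_const_nhds
    · exact (Filter.tendsto_id.mono_left nhdsWithin_le_nhds).mul tendsto_const_nhds
  have hfinal : |C v - φ 0 - 1 * φ' 0| ≤ 4 * κ * S / γ := by
    refine le_of_tendsto htendR ?_
    filter_upwards [self_mem_nhdsWithin] with τ hτ
    exact key τ hτ
  -- identify φ 0 and φ' 0
  have hw0 : w 0 = u := by rw [hw]; simp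
  have hφ0 : φ 0 = C u := by show C (w 0) = C u; rw [hw0]
  have hφ'0 : φ' 0 = (v.1 - u.1) * fderiv ℝ C u ((1:ℝ),(0:ℝ)) +
      (v.2 - u.2) * fderiv ℝ C u ((0:ℝ),(1:ℝ)) := by
    have h0 : φ' 0 = (fderiv ℝ C u) d := by
      show (fderiv ℝ C (w 0)) d = _
      rw [hw0]
    have h1 : (fderiv ℝ C u) d = d.1 * (fderiv ℝ C u) ((1:ℝ),(0:ℝ)) +
        d.2 * (fderiv ℝ C u) ((0:ℝ),(1:ℝ)) := aux_exp1 _ d.1 d.2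
    rw [h0, h1, hd1, hd2]
  rw [hφ0, hφ'0, one_mul] at hfinal
  refine hfinal.trans (le_of_eq ?_)
  rw [hS, hd1, hd2]
  ring
end
end

section
/- The double integral ∫_0^1 ∫_0^1 t/(1 − st) dt ds equals 1. -/
open MeasureTheory Filter

lemma monoInt (n : ℕ) : ∫ x in Set.Ioo (0:ℝ) 1, x ^ n = 1 / (n + 1) := by
  rw [← integral_Ioc_eq_integral_Ioo, ← intervalIntegral.integral_of_le zero_le_one,
    integral_pow]
  simp

lemma monoIntegrable (n : ℕ) : IntegrableOn (fun x : ℝ => x ^ n) (Set.Ioo 0 1) :=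
  ((continuous_pow n).integrableOn_Icc (a := (0:ℝ)) (b := 1)).mono_set
    Set.Ioo_subset_Icc_self

lemma innerInt {s : ℝ} (hs0 : 0 < s) (hs1 : s < 1) :
    ∫ t in Set.Ioo (0:ℝ) 1, t / (1 - s * t) = ∑' n : ℕ, s ^ n / (n + 2) := by
  have hF_int : ∀ n : ℕ, IntegrableOn (fun t : ℝ => s ^ n * t ^ (n + 1)) (Set.Ioo 0 1) :=
    fun n => (monoIntegrable (n + 1)).const_mul _
  have hval : ∀ n : ℕ, (∫ t in Set.Ioo (0:ℝ) 1, s ^ n * t ^ (n + 1)) = s ^ n / (n + 2) := by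
    intro n
    rw [MeasureTheory.integral_const_mul, monoInt]
    push_cast
    ring
  have hnorm : ∀ n : ℕ, (∫ t in Set.Ioo (0:ℝ) 1, ‖s ^ n * t ^ (n + 1)‖) = s ^ n / (n + 2) := by
    intro n
    rw [← hval n]
    refine setIntegral_congr_fun measurableSet_Ioo fun t ht => ?_
    obtain ⟨ht0, ht1⟩ := ht
    rw [Real.norm_of_nonneg (by positivity)]
  have hsum : Summable fun n : ℕ => ∫ t in Set.Ioo (0:ℝ) 1, ‖s ^ n * t ^ (n + 1)‖ := by
    simp_rw [hnorm]
    refine Summable.of_nonneg_of_le (fun n => by positivity) (fun n => ?_)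
      (summable_geometric_of_lt_one hs0.le hs1)
    rw [div_le_iff₀ (by positivity)]
    nlinarith [pow_nonneg hs0.le n]
  have key := hasSum_integral_of_summable_integral_norm (μ := volume.restrict (Set.Ioo 0 1))
    (fun n => hF_int n) hsum
  have heq : (∫ t in Set.Ioo (0:ℝ) 1, ∑' n : ℕ, s ^ n * t ^ (n + 1))
      = ∫ t in Set.Ioo (0:ℝ) 1, t / (1 - s * t) := by
    refine setIntegral_congr_fun measurableSet_Ioo fun t ht => ?_
    obtain ⟨ht0, ht1⟩ := ht
    have hst : s * t < 1 := by nlinarith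
    have hst0 : 0 ≤ s * t := by positivity
    have : ∀ n : ℕ, s ^ n * t ^ (n + 1) = t * (s * t) ^ n := by
      intro n; rw [pow_succ, mul_pow]; ring
    simp_rw [this]
    rw [tsum_mul_left, tsum_geometric_of_lt_one hst0 hst, div_eq_mul_inv]
  rw [← heq, ← key.tsum_eq]
  exact tsum_congr hval

lemma telescope : HasSum (fun n : ℕ => (1 / ((n:ℝ) + 2)) * (1 / ((n:ℝ) + 1))) 1 := by
  rw [hasSum_iff_tendsto_nat_of_nonneg (fun n => by positivity)]
  have heq : ∀ n : ℕ, ∑ i ∈ Finset.range n, (1 / ((i:ℝ) + 2)) * (1 / ((i:ℝ) + 1))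
      = 1 - 1 / ((n:ℝ) + 1) := by
    intro n
    have : ∀ i ∈ Finset.range n, (1 / ((i:ℝ) + 2)) * (1 / ((i:ℝ) + 1))
        = 1 / ((i:ℝ) + 1) - 1 / (((i:ℕ)+1 : ℕ) + 1) := by
      intro i _
      push_cast
      have h1 : ((i:ℝ) + 1) ≠ 0 := by positivity
      have h2 : ((i:ℝ) + 2) ≠ 0 := by positivity
      field_simp
      ring
    rw [Finset.sum_congr rfl this, Finset.sum_range_sub' (fun i : ℕ => 1 / ((i:ℝ) + 1))]
    norm_num
  simp_rw [heq]
  have := tendsto_one_div_add_atTop_nhds_zero_nat (𝕜 := ℝ)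
  have h2 : Tendsto (fun n : ℕ => 1 - 1 / ((n:ℝ) + 1)) atTop (nhds (1 - 0)) :=
    tendsto_const_nhds.sub tendsto_one_div_add_atTop_nhds_zero_nat
  simpa using h2

/-- `∫₀¹ ∫₀¹ t/(1 - st) dt ds = 1`. -/
theorem stmt14 :
    (∫ s in Set.Ioo (0 : ℝ) 1, ∫ t in Set.Ioo (0 : ℝ) 1, t / (1 - s * t)) = 1 := by
  have hG_int : ∀ n : ℕ, IntegrableOn (fun s : ℝ => s ^ n / ((n:ℝ) + 2)) (Set.Ioo 0 1) := by
    intro n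
    simpa [div_eq_inv_mul, IntegrableOn] using (monoIntegrable n).const_mul (((n:ℝ) + 2)⁻¹)
  have hval : ∀ n : ℕ, (∫ s in Set.Ioo (0:ℝ) 1, s ^ n / ((n:ℝ) + 2))
      = (1 / ((n:ℝ) + 2)) * (1 / ((n:ℝ) + 1)) := by
    intro n
    simp_rw [div_eq_inv_mul (b := ((n:ℝ) + 2))]
    rw [MeasureTheory.integral_const_mul, monoInt]
    ring
  have hnorm : ∀ n : ℕ, (∫ s in Set.Ioo (0:ℝ) 1, ‖s ^ n / ((n:ℝ) + 2)‖)
      = (1 / ((n:ℝ) + 2)) * (1 / ((n:ℝ) + 1)) := by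
    intro n
    rw [← hval n]
    refine setIntegral_congr_fun measurableSet_Ioo fun s hs => ?_
    obtain ⟨hs0, hs1⟩ := hs
    rw [Real.norm_of_nonneg (by positivity)]
  have hsum : Summable fun n : ℕ => ∫ s in Set.Ioo (0:ℝ) 1, ‖s ^ n / ((n:ℝ) + 2)‖ := by
    simp_rw [hnorm]
    exact telescope.summable
  have key := hasSum_integral_of_summable_integral_norm (μ := volume.restrict (Set.Ioo 0 1))
    (fun n => hG_int n) hsum
  have heq : (∫ s in Set.Ioo (0:ℝ) 1, ∑' n : ℕ, s ^ n / ((n:ℝ) + 2))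
      = ∫ s in Set.Ioo (0:ℝ) 1, ∫ t in Set.Ioo (0:ℝ) 1, t / (1 - s * t) := by
    refine setIntegral_congr_fun measurableSet_Ioo fun s hs => ?_
    exact (innerInt hs.1 hs.2).symm
  rw [← heq]
  have h1 : HasSum (fun n : ℕ => ∫ s in Set.Ioo (0:ℝ) 1, s ^ n / ((n:ℝ) + 2))
      (∫ s in Set.Ioo (0:ℝ) 1, ∑' n : ℕ, s ^ n / ((n:ℝ) + 2)) := key
  have h2 : HasSum (fun n : ℕ => ∫ s in Set.Ioo (0:ℝ) 1, s ^ n / ((n:ℝ) + 2)) 1 := by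
    have := telescope
    refine HasSum.congr_fun this fun n => ?_
    exact hval n
  exact (h1.unique h2)
end

section
/- Let (X_i, Y_{i1}, Y_{i2}), i = 1,...,n, be i.i.d. copies of a triple (X, Y_1, Y_2) satisfying condition (G1), and for j ∈ {1,2} let F̂_{n,j} be estimators of the conditional margins (measurable functions of the sample and of (y,x)) satisfying conditions (H1) and (H2). Then for each j ∈ {1,2} and each γ ∈ (0,1/2), sup_{u ∈ [γ,1−γ], x ∈ S_X} | F_j( F̂_{n,j}⁻(u|x) | x ) − u | = o_P(n^{−1/4}) as n → ∞, where F̂_{n,j}⁻(u|x) = inf{y ∈ ℝ : F̂_{n,j}(y|x) ≥ u}. -/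
open MeasureTheory ProbabilityTheory Filter Set Topology

noncomputable section

/-- Marginal density of `X` from a joint density of `(X, Y₁, Y₂)`. -/
def fX3 (fXY : ℝ → ℝ → ℝ → ℝ) (x : ℝ) : ℝ := ∫ p : ℝ × ℝ, fXY x p.1 p.2

/-- Conditional margin `F₁(y|x)` from a joint density of `(X, Y₁, Y₂)`. -/
def F1c (fXY : ℝ → ℝ → ℝ → ℝ) (y x : ℝ) : ℝ :=
  (∫ z in Set.Iic y, ∫ t, fXY x z t) / fX3 fXY x

/-- Conditional margin `F₂(y|x)` from a joint density of `(X, Y₁, Y₂)`. -/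
def F2c (fXY : ℝ → ℝ → ℝ → ℝ) (y x : ℝ) : ℝ :=
  (∫ z in Set.Iic y, ∫ t, fXY x t z) / fX3 fXY x

/-- Conditional marginal density `f₁(y|x)`. -/
def f1c (fXY : ℝ → ℝ → ℝ → ℝ) (y x : ℝ) : ℝ := (∫ t, fXY x y t) / fX3 fXY x

/-- Conditional marginal density `f₂(y|x)`. -/
def f2c (fXY : ℝ → ℝ → ℝ → ℝ) (y x : ℝ) : ℝ := (∫ t, fXY x t y) / fX3 fXY x

/-- Condition (G1) on the law of the triple `(X, Y₁, Y₂)`, described through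
its joint density `fXY` on `S_X × ℝ²`, `S_X = (s0, s1)`. -/
structure CondG1T (fXY : ℝ → ℝ → ℝ → ℝ) (s0 s1 b M δ : ℝ) : Prop where
  hs : s0 < s1
  hb : 0 < b
  hM : 0 < M
  hδ0 : 0 < δ
  hδ1 : δ ≤ 1
  nonneg : ∀ x y1 y2, 0 ≤ fXY x y1 y2
  supp : ∀ x y1 y2, x ∉ Set.Ioo s0 s1 → fXY x y1 y2 = 0
  F1reg : HClass 3 δ M (Set.univ ×ˢ Set.Ioo s0 s1) (fun p : ℝ × ℝ => F1c fXY p.1 p.2)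
  F2reg : HClass 3 δ M (Set.univ ×ˢ Set.Ioo s0 s1) (fun p : ℝ × ℝ => F2c fXY p.1 p.2)
  fXreg : HClass 1 1 M (Set.Ioo s0 s1) (fX3 fXY)
  fXlb : ∀ x ∈ Set.Ioo s0 s1, b ≤ fX3 fXY x
  f1lb : ∀ γ ∈ Set.Ioo (0 : ℝ) (1 / 2), ∃ bγ > (0 : ℝ), ∀ x ∈ Set.Ioo s0 s1,
    ∀ y ∈ Set.Icc (genInv (fun z => F1c fXY z x) γ) (genInv (fun z => F1c fXY z x) (1 - γ)),
      bγ ≤ f1c fXY y x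
  f2lb : ∀ γ ∈ Set.Ioo (0 : ℝ) (1 / 2), ∃ bγ > (0 : ℝ), ∀ x ∈ Set.Ioo s0 s1,
    ∀ y ∈ Set.Icc (genInv (fun z => F2c fXY z x) γ) (genInv (fun z => F2c fXY z x) (1 - γ)),
      bγ ≤ f2c fXY y x

/-- The data `(X_i, Y_{i1}, Y_{i2})` are i.i.d. with common law of density `fXY`. -/
structure IIDLaw3 {Ω : Type*} [MeasurableSpace Ω] (P : Measure Ω)
    (X Y1 Y2 : ℕ → Ω → ℝ) (fXY : ℝ → ℝ → ℝ → ℝ) : Prop where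
  measX : ∀ i, Measurable (X i)
  measY1 : ∀ i, Measurable (Y1 i)
  measY2 : ∀ i, Measurable (Y2 i)
  indep : iIndepFun (fun i ω => (X i ω, Y1 i ω, Y2 i ω)) P
  ident : ∀ i, IdentDistrib (fun ω => (X i ω, Y1 i ω, Y2 i ω))
    (fun ω => (X 0 ω, Y1 0 ω, Y2 0 ω)) P P
  law : Measure.map (fun ω => (X 0 ω, Y1 0 ω, Y2 0 ω)) P
    = (volume : Measure (ℝ × ℝ × ℝ)).withDensity
        (fun p => ENNReal.ofReal (fXY p.1 p.2.1 p.2.2))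

/-- The (common) conditional copula,
`C(u₁,u₂) = P(F₁(Y₁|X) ≤ u₁, F₂(Y₂|X) ≤ u₂)`. -/
def copC {Ω : Type*} [MeasurableSpace Ω] (P : Measure Ω)
    (X Y1 Y2 : ℕ → Ω → ℝ) (fXY : ℝ → ℝ → ℝ → ℝ) (u : ℝ × ℝ) : ℝ :=
  (P {ω | F1c fXY (Y1 0 ω) (X 0 ω) ≤ u.1 ∧ F2c fXY (Y2 0 ω) (X 0 ω) ≤ u.2}).toReal

/-- Condition (G2) on a copula `C` : twice continuously differentiable on the
open unit square with the weighted bound on its second-order partial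
derivatives. -/
def CopulaG2 (C : ℝ × ℝ → ℝ) : Prop :=
  ContDiffOn ℝ 2 C (Set.Ioo 0 1 ×ˢ Set.Ioo 0 1) ∧
  ∃ κ > (0 : ℝ), ∀ p ∈ Set.Ioo (0 : ℝ) 1 ×ˢ Set.Ioo (0 : ℝ) 1, ∀ j k : Fin 2,
    |fderiv ℝ (fun q => fderiv ℝ C q (bas2 j)) p (bas2 k)| ≤
      κ / Real.sqrt (coord2 p j * (1 - coord2 p j) * (coord2 p k * (1 - coord2 p k)))

/-- Empirical (marginal) distribution function `Ĝ_{n}` of the pseudo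
observations built from a (possibly estimated) conditional margin `Fh`. -/
def Ghat {Ω : Type*} (Fh : ℕ → ℝ → ℝ → Ω → ℝ) (X Yj : ℕ → Ω → ℝ)
    (n : ℕ) (u : ℝ) (ω : Ω) : ℝ :=
  (n : ℝ)⁻¹ * ∑ i ∈ Finset.range n, if Fh n (Yj i ω) (X i ω) ω ≤ u then (1 : ℝ) else 0

/-- The empirical conditional copula `Ĉ_n` built from (possibly estimated)
conditional margins `Fh1`, `Fh2`. -/
def Chat {Ω : Type*} (Fh1 Fh2 : ℕ → ℝ → ℝ → Ω → ℝ) (X Y1 Y2 : ℕ → Ω → ℝ)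
    (n : ℕ) (u1 u2 : ℝ) (ω : Ω) : ℝ :=
  (n : ℝ)⁻¹ * ∑ i ∈ Finset.range n,
    (if Fh1 n (Y1 i ω) (X i ω) ω ≤ genInv (fun v => Ghat Fh1 X Y1 n v ω) u1
      then (1 : ℝ) else 0) *
    (if Fh2 n (Y2 i ω) (X i ω) ω ≤ genInv (fun v => Ghat Fh2 X Y2 n v ω) u2
      then (1 : ℝ) else 0)

/-- Condition (H1) for an estimator `Fh` of the conditional margin `F`. -/
def CondH1 {Ω : Type*} [MeasurableSpace Ω] (P : Measure Ω) (s0 s1 : ℝ)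
    (F : ℝ → ℝ → ℝ) (Fh : ℕ → ℝ → ℝ → Ω → ℝ) : Prop :=
  ∀ γ ∈ Set.Ioo (0 : ℝ) (1 / 2),
    Tendsto (fun n => P {ω | ∀ x ∈ Set.Ioo s0 s1,
        Continuous (fun y => Fh n y x ω) ∧
        StrictMonoOn (fun y => Fh n y x ω)
          (Set.Icc (genInv (fun z => F z x) γ) (genInv (fun z => F z x) (1 - γ)))})
      atTop (𝓝 1)

/-- Condition (H2) for an estimator `Fh` of the conditional margin `F`:
`sup_{x ∈ S_X, y ∈ ℝ} |F̂_{n}(y|x) - F(y|x)| = o_P(n^{-1/4})`. -/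
def CondH2 {Ω : Type*} [MeasurableSpace Ω] (P : Measure Ω) (s0 s1 : ℝ)
    (F : ℝ → ℝ → ℝ) (Fh : ℕ → ℝ → ℝ → Ω → ℝ) : Prop :=
  ∀ ε > (0 : ℝ),
    Tendsto (fun n : ℕ => P {ω | ∃ x ∈ Set.Ioo s0 s1, ∃ y : ℝ,
        ε * (n : ℝ) ^ (-(1 / 4) : ℝ) < |Fh n y x ω - F y x|})
      atTop (𝓝 0)

/-- Condition (H3) for an estimator `Fh` of a conditional margin. -/
def CondH3 {Ω : Type*} [MeasurableSpace Ω] (P : Measure Ω) (s0 s1 : ℝ)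
    (Fh : ℕ → ℝ → ℝ → Ω → ℝ) : Prop :=
  ∀ γ ∈ Set.Ioo (0 : ℝ) (1 / 2), ∃ δ₁ > (0 : ℝ), ∃ M₁ > (0 : ℝ),
    Tendsto (fun n => P {ω | ∀ u ∈ Set.Icc γ (1 - γ),
        HClass 1 δ₁ M₁ (Set.Ioo s0 s1) (fun x => genInv (fun y => Fh n y x ω) u)})
      atTop (𝓝 1)

section AuxStmt17

/-- Key deterministic quantile estimate: if `f` is a monotone continuous "cdf"
with the right limits, and `g` is uniformly `η`-close to `f` with `η ≤ γ/2`,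
then `f` evaluated at the generalized inverse of `g` at `u ∈ [γ, 1-γ]` is
within `η` of `u`. -/
private lemma quantile_bound (f g : ℝ → ℝ) (u η γ : ℝ)
    (hγ : 0 < γ) (huγ : γ ≤ u) (hu1 : u ≤ 1 - γ) (hη0 : 0 ≤ η) (hηγ : η ≤ γ / 2)
    (hmono : Monotone f) (hcont : Continuous f)
    (hlo : Tendsto (fun n : ℕ => f (-(n : ℝ))) atTop (𝓝 0))
    (hhi : Tendsto (fun n : ℕ => f (n : ℝ)) atTop (𝓝 1))
    (hclose : ∀ y, |g y - f y| ≤ η) :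
    |f (genInv g u) - u| ≤ η := by
  obtain ⟨n₁, hn₁⟩ :=
    (hhi.eventually (eventually_gt_nhds (show 1 - γ / 2 < 1 by linarith))).exists
  obtain ⟨n₀, hn₀⟩ :=
    (hlo.eventually (eventually_lt_nhds (show (0 : ℝ) < γ / 2 by linarith))).exists
  set S : Set ℝ := {y : ℝ | u ≤ g y} with hS
  have hmem : (n₁ : ℝ) ∈ S := by
    have h2 := abs_le.mp (hclose (n₁ : ℝ))
    simp only [hS, Set.mem_setOf_eq]
    linarith [h2.1]
  have hSne : S.Nonempty := ⟨_, hmem⟩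
  have hlbd : ∀ y ∈ S, -(n₀ : ℝ) ≤ y := by
    intro y hy
    by_contra hcon
    push_neg at hcon
    have h2 := abs_le.mp (hclose y)
    have h3 : f y ≤ f (-(n₀ : ℝ)) := hmono hcon.le
    have h4 : u ≤ g y := hy
    linarith [h2.2]
  have hbdd : BddBelow S := ⟨-(n₀ : ℝ), hlbd⟩
  have hgi : genInv g u = sInf S := rfl
  rw [hgi]
  set ystar := sInf S with hystar
  have seq1 : Tendsto (fun n : ℕ => ystar - 1 / (n + 1)) atTop (𝓝 ystar) := by
    have h2 := (tendsto_const_nhds (x := ystar) (f := (atTop : Filter ℕ))).sub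
      tendsto_one_div_add_atTop_nhds_zero_nat
    simpa using h2
  have seq2 : Tendsto (fun n : ℕ => ystar + 1 / (n + 1)) atTop (𝓝 ystar) := by
    have h2 := (tendsto_const_nhds (x := ystar) (f := (atTop : Filter ℕ))).add
      tendsto_one_div_add_atTop_nhds_zero_nat
    simpa using h2
  have hupper : f ystar ≤ u + η := by
    refine le_of_tendsto ((hcont.tendsto ystar).comp seq1) (Eventually.of_forall fun n => ?_)
    have hpos : (0 : ℝ) < 1 / (n + 1) := by positivity
    have hyn : ystar - 1 / (n + 1 : ℝ) < ystar := by linarith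
    have hnot : ystar - 1 / (n + 1 : ℝ) ∉ S := fun hmem' =>
      absurd (csInf_le hbdd hmem') (not_le.2 hyn)
    have hgy : g (ystar - 1 / (n + 1 : ℝ)) < u := not_le.mp hnot
    have h2 := abs_le.mp (hclose (ystar - 1 / (n + 1 : ℝ)))
    show f (ystar - 1 / (n + 1 : ℝ)) ≤ u + η
    linarith [h2.1]
  have hlower : u - η ≤ f ystar := by
    refine ge_of_tendsto ((hcont.tendsto ystar).comp seq2) (Eventually.of_forall fun n => ?_)
    have hpos : (0 : ℝ) < 1 / (n + 1) := by positivity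
    have hyn : ystar < ystar + 1 / (n + 1 : ℝ) := by linarith
    obtain ⟨z, hzS, hz⟩ := exists_lt_of_csInf_lt hSne hyn
    have h2 := abs_le.mp (hclose z)
    have h3 : f z ≤ f (ystar + 1 / (n + 1 : ℝ)) := hmono hz.le
    have h4 : u ≤ g z := hzS
    show u - η ≤ f (ystar + 1 / (n + 1 : ℝ))
    linarith [h2.2]
  rw [abs_le]
  constructor <;> linarith

/-- Facts about a cdf built from an integrable nonnegative density `h` with
total mass `c > 0`. -/
private lemma cdf_facts (h : ℝ → ℝ) (c : ℝ) (hc : 0 < c)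
    (hint : Integrable h (volume : Measure ℝ)) (hnn : ∀ z, 0 ≤ h z)
    (hsum : (∫ z, h z) = c) :
    Monotone (fun y => (∫ z in Set.Iic y, h z) / c) ∧
    Tendsto (fun n : ℕ => (∫ z in Set.Iic (-(n : ℝ)), h z) / c) atTop (𝓝 0) ∧
    Tendsto (fun n : ℕ => (∫ z in Set.Iic ((n : ℝ)), h z) / c) atTop (𝓝 1) := by
  have hmono : Monotone fun y : ℝ => ∫ z in Set.Iic y, h z := fun a b hab =>
    setIntegral_mono_set hint.integrableOn (ae_of_all _ hnn)
      (HasSubset.Subset.eventuallyLE (Set.Iic_subset_Iic.mpr hab))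
  have key : ∀ s : ℕ → Set ℝ, (∀ n, MeasurableSet (s n)) →
      ∀ flim : ℝ → ℝ, (∀ z, Tendsto (fun n => (s n).indicator h z) atTop (𝓝 (flim z))) →
      Tendsto (fun n : ℕ => ∫ z in s n, h z) atTop (𝓝 (∫ z, flim z)) := by
    intro s hs flim hptw
    have heq : ∀ n, ∫ z in s n, h z = ∫ z, (s n).indicator h z := fun n =>
      (integral_indicator (hs n)).symm
    simp only [heq]
    refine tendsto_integral_of_dominated_convergence h
      (fun n => hint.aestronglyMeasurable.indicator (hs n)) hint
      (fun n => ae_of_all _ fun z => ?_) (ae_of_all _ hptw)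
    calc ‖(s n).indicator h z‖ ≤ ‖h z‖ := norm_indicator_le_norm_self h z
      _ = h z := by rw [Real.norm_eq_abs, abs_of_nonneg (hnn z)]
  have hdown : Tendsto (fun n : ℕ => ∫ z in Set.Iic (-(n : ℝ)), h z) atTop (𝓝 0) := by
    have hkey := key (fun n => Set.Iic (-(n : ℝ))) (fun _ => measurableSet_Iic)
      (fun _ => (0 : ℝ)) ?_
    · simpa using hkey
    · intro z
      have hev : ∀ᶠ n : ℕ in atTop, (Set.Iic (-(n : ℝ))).indicator h z = 0 := by
        obtain ⟨N, hN⟩ := exists_nat_gt (-z)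
        filter_upwards [eventually_ge_atTop N] with n hn
        apply Set.indicator_of_notMem
        simp only [Set.mem_Iic, not_le]
        have hcast : (N : ℝ) ≤ n := Nat.cast_le.mpr hn
        linarith
      exact tendsto_const_nhds.congr' (hev.mono fun n hn => hn.symm)
  have hup : Tendsto (fun n : ℕ => ∫ z in Set.Iic ((n : ℝ)), h z) atTop (𝓝 c) := by
    have hkey := key (fun n => Set.Iic ((n : ℝ))) (fun _ => measurableSet_Iic) h ?_
    · rwa [hsum] at hkey
    · intro z
      have hev : ∀ᶠ n : ℕ in atTop, (Set.Iic ((n : ℝ))).indicator h z = h z := by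
        obtain ⟨N, hN⟩ := exists_nat_ge z
        filter_upwards [eventually_ge_atTop N] with n hn
        apply Set.indicator_of_mem
        simp only [Set.mem_Iic]
        have hcast : (N : ℝ) ≤ n := Nat.cast_le.mpr hn
        linarith
      exact tendsto_const_nhds.congr' (hev.mono fun n hn => hn.symm)
  refine ⟨fun a b hab => ?_, ?_, ?_⟩
  · simp only [div_eq_mul_inv]
    exact mul_le_mul_of_nonneg_right (hmono hab) (inv_nonneg.mpr hc.le)
  · simpa using hdown.div_const c
  · have := hup.div_const c
    rwa [div_self hc.ne'] at this

/-- The conditional margin `F₁(·|x)` is monotone, continuous, and has the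
right limits at `±∞`, for `x` in the support. -/
private lemma margin_facts1 (fXY : ℝ → ℝ → ℝ → ℝ) (s0 s1 b M δ : ℝ)
    (hG1 : CondG1T fXY s0 s1 b M δ) (x : ℝ) (hx : x ∈ Set.Ioo s0 s1) :
    Monotone (fun y => F1c fXY y x) ∧ Continuous (fun y => F1c fXY y x) ∧
    Tendsto (fun n : ℕ => F1c fXY (-(n : ℝ)) x) atTop (𝓝 0) ∧
    Tendsto (fun n : ℕ => F1c fXY ((n : ℝ)) x) atTop (𝓝 1) := by
  have hc : 0 < fX3 fXY x := lt_of_lt_of_le hG1.hb (hG1.fXlb x hx)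
  have hpair : Integrable (fun p : ℝ × ℝ => fXY x p.1 p.2)
      ((volume : Measure ℝ).prod volume) := by
    rw [← Measure.volume_eq_prod]
    by_contra hcon
    have h0 : fX3 fXY x = 0 := by simp only [fX3]; exact integral_undef hcon
    have h1 := hG1.fXlb x hx
    rw [h0] at h1
    linarith [hG1.hb]
  have hint : Integrable (fun z => ∫ t, fXY x z t) (volume : Measure ℝ) :=
    hpair.integral_prod_left
  have hnn : ∀ z, 0 ≤ ∫ t, fXY x z t := fun z =>
    integral_nonneg fun t => hG1.nonneg x z t
  have hsum : (∫ z, ∫ t, fXY x z t) = fX3 fXY x := by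
    simp only [fX3]
    rw [Measure.volume_eq_prod]
    exact (integral_prod _ hpair).symm
  obtain ⟨hm, hl0, hl1⟩ := cdf_facts (fun z => ∫ t, fXY x z t) (fX3 fXY x) hc hint hnn hsum
  have hcont : Continuous fun y => F1c fXY y x := by
    rw [continuous_iff_continuousAt]
    intro y
    have hopen : IsOpen ((Set.univ : Set ℝ) ×ˢ Set.Ioo s0 s1) := isOpen_univ.prod isOpen_Ioo
    have hmem : ((y, x) : ℝ × ℝ) ∈ (Set.univ : Set ℝ) ×ˢ Set.Ioo s0 s1 :=
      ⟨Set.mem_univ _, hx⟩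
    have h1 : ContinuousAt (fun p : ℝ × ℝ => F1c fXY p.1 p.2) (y, x) :=
      hG1.F1reg.1.continuousOn.continuousAt (hopen.mem_nhds hmem)
    have h2 : ContinuousAt (fun y : ℝ => ((y, x) : ℝ × ℝ)) y :=
      (continuous_id.prodMk continuous_const).continuousAt
    exact ContinuousAt.comp (f := fun y : ℝ => ((y, x) : ℝ × ℝ)) h1 h2
  refine ⟨?_, hcont, ?_, ?_⟩
  · simp only [F1c]; exact hm
  · simp only [F1c]; exact hl0
  · simp only [F1c]; exact hl1

/-- The conditional margin `F₂(·|x)` is monotone, continuous, and has the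
right limits at `±∞`, for `x` in the support. -/
private lemma margin_facts2 (fXY : ℝ → ℝ → ℝ → ℝ) (s0 s1 b M δ : ℝ)
    (hG1 : CondG1T fXY s0 s1 b M δ) (x : ℝ) (hx : x ∈ Set.Ioo s0 s1) :
    Monotone (fun y => F2c fXY y x) ∧ Continuous (fun y => F2c fXY y x) ∧
    Tendsto (fun n : ℕ => F2c fXY (-(n : ℝ)) x) atTop (𝓝 0) ∧
    Tendsto (fun n : ℕ => F2c fXY ((n : ℝ)) x) atTop (𝓝 1) := by
  have hc : 0 < fX3 fXY x := lt_of_lt_of_le hG1.hb (hG1.fXlb x hx)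
  have hpair : Integrable (fun p : ℝ × ℝ => fXY x p.1 p.2)
      ((volume : Measure ℝ).prod volume) := by
    rw [← Measure.volume_eq_prod]
    by_contra hcon
    have h0 : fX3 fXY x = 0 := by simp only [fX3]; exact integral_undef hcon
    have h1 := hG1.fXlb x hx
    rw [h0] at h1
    linarith [hG1.hb]
  have hint : Integrable (fun z => ∫ t, fXY x t z) (volume : Measure ℝ) :=
    hpair.integral_prod_right
  have hnn : ∀ z, 0 ≤ ∫ t, fXY x t z := fun z =>
    integral_nonneg fun t => hG1.nonneg x t z
  have hsum : (∫ z, ∫ t, fXY x t z) = fX3 fXY x := by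
    simp only [fX3]
    rw [Measure.volume_eq_prod]
    exact (integral_prod_symm _ hpair).symm
  obtain ⟨hm, hl0, hl1⟩ := cdf_facts (fun z => ∫ t, fXY x t z) (fX3 fXY x) hc hint hnn hsum
  have hcont : Continuous fun y => F2c fXY y x := by
    rw [continuous_iff_continuousAt]
    intro y
    have hopen : IsOpen ((Set.univ : Set ℝ) ×ˢ Set.Ioo s0 s1) := isOpen_univ.prod isOpen_Ioo
    have hmem : ((y, x) : ℝ × ℝ) ∈ (Set.univ : Set ℝ) ×ˢ Set.Ioo s0 s1 :=
      ⟨Set.mem_univ _, hx⟩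
    have h1 : ContinuousAt (fun p : ℝ × ℝ => F2c fXY p.1 p.2) (y, x) :=
      hG1.F2reg.1.continuousOn.continuousAt (hopen.mem_nhds hmem)
    have h2 : ContinuousAt (fun y : ℝ => ((y, x) : ℝ × ℝ)) y :=
      (continuous_id.prodMk continuous_const).continuousAt
    exact ContinuousAt.comp (f := fun y : ℝ => ((y, x) : ℝ × ℝ)) h1 h2
  refine ⟨?_, hcont, ?_, ?_⟩
  · simp only [F2c]; exact hm
  · simp only [F2c]; exact hl0
  · simp only [F2c]; exact hl1

/-- The main argument for one margin. -/
private lemma stmt17_half {Ω : Type*} [MeasurableSpace Ω] (P : Measure Ω)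
    [IsProbabilityMeasure P]
    (s0 s1 : ℝ) (F : ℝ → ℝ → ℝ) (Fh : ℕ → ℝ → ℝ → Ω → ℝ)
    (hF : ∀ x ∈ Set.Ioo s0 s1, Monotone (fun y => F y x) ∧ Continuous (fun y => F y x) ∧
      Tendsto (fun n : ℕ => F (-(n : ℝ)) x) atTop (𝓝 0) ∧
      Tendsto (fun n : ℕ => F ((n : ℝ)) x) atTop (𝓝 1))
    (hH2 : CondH2 P s0 s1 F Fh) (γ : ℝ) (hγ : γ ∈ Set.Ioo (0 : ℝ) (1 / 2))
    (ε : ℝ) (hε : 0 < ε) :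
    Tendsto (fun n : ℕ => P {ω | ∃ u ∈ Set.Icc γ (1 - γ), ∃ x ∈ Set.Ioo s0 s1,
        ε * (n : ℝ) ^ (-(1 / 4) : ℝ) < |F (genInv (fun y => Fh n y x ω) u) x - u|})
      atTop (𝓝 0) := by
  have hrate : Tendsto (fun n : ℕ => ε * (n : ℝ) ^ (-(1 / 4) : ℝ)) atTop (𝓝 0) := by
    have h1 : Tendsto (fun n : ℕ => (n : ℝ) ^ (-(1 / 4) : ℝ)) atTop (𝓝 0) :=
      (tendsto_rpow_neg_atTop (by norm_num)).comp tendsto_natCast_atTop_atTop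
    simpa using h1.const_mul ε
  have hev : ∀ᶠ n : ℕ in atTop, ε * (n : ℝ) ^ (-(1 / 4) : ℝ) ≤ γ / 2 :=
    hrate.eventually (eventually_le_nhds (by linarith [hγ.1]))
  have hsub : ∀ᶠ n : ℕ in atTop,
      {ω | ∃ u ∈ Set.Icc γ (1 - γ), ∃ x ∈ Set.Ioo s0 s1,
        ε * (n : ℝ) ^ (-(1 / 4) : ℝ) < |F (genInv (fun y => Fh n y x ω) u) x - u|}
      ⊆ {ω | ∃ x ∈ Set.Ioo s0 s1, ∃ y : ℝ,
        ε * (n : ℝ) ^ (-(1 / 4) : ℝ) < |Fh n y x ω - F y x|} := by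
    filter_upwards [hev] with n hn
    intro ω hω
    by_contra hcon
    simp only [Set.mem_setOf_eq] at hcon
    push_neg at hcon
    obtain ⟨u, hu, x, hx, hbad⟩ := hω
    obtain ⟨hm, hc, hl, hh⟩ := hF x hx
    have hq := quantile_bound (fun y => F y x) (fun y => Fh n y x ω) u
      (ε * (n : ℝ) ^ (-(1 / 4) : ℝ)) γ hγ.1 hu.1 hu.2
      (by positivity) hn hm hc hl hh (fun y => hcon x hx y)
    exact absurd hbad (not_lt.mpr hq)
  have h2 := hH2 ε hε
  refine tendsto_of_tendsto_of_tendsto_of_le_of_le' tendsto_const_nhds h2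
    (Eventually.of_forall fun n => zero_le) ?_
  filter_upwards [hsub] with n hn
  exact measure_mono hn

end AuxStmt17

/-- Fact 1: under (G1), (H1), (H2), for each margin `j` and
each `γ ∈ (0,1/2)`,
`sup_{u ∈ [γ,1-γ], x ∈ S_X} |F_j(F̂_{n,j}⁻(u|x)|x) - u| = o_P(n^{-1/4})`. -/
theorem stmt17
    {Ω : Type*} [MeasurableSpace Ω] (P : Measure Ω) [IsProbabilityMeasure P]
    (X Y1 Y2 : ℕ → Ω → ℝ) (fXY : ℝ → ℝ → ℝ → ℝ) (s0 s1 b M δ : ℝ)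
    (hG1 : CondG1T fXY s0 s1 b M δ) (hiid : IIDLaw3 P X Y1 Y2 fXY)
    (Fh1 Fh2 : ℕ → ℝ → ℝ → Ω → ℝ)
    (hFh1meas : ∀ n, Measurable fun p : ℝ × ℝ × Ω => Fh1 n p.1 p.2.1 p.2.2)
    (hFh2meas : ∀ n, Measurable fun p : ℝ × ℝ × Ω => Fh2 n p.1 p.2.1 p.2.2)
    (hH1₁ : CondH1 P s0 s1 (F1c fXY) Fh1) (hH1₂ : CondH1 P s0 s1 (F2c fXY) Fh2)
    (hH2₁ : CondH2 P s0 s1 (F1c fXY) Fh1) (hH2₂ : CondH2 P s0 s1 (F2c fXY) Fh2) :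
    ∀ γ ∈ Set.Ioo (0 : ℝ) (1 / 2), ∀ ε > (0 : ℝ),
      Tendsto (fun n : ℕ => P {ω | ∃ u ∈ Set.Icc γ (1 - γ), ∃ x ∈ Set.Ioo s0 s1,
          ε * (n : ℝ) ^ (-(1 / 4) : ℝ) <
            |F1c fXY (genInv (fun y => Fh1 n y x ω) u) x - u|})
        atTop (𝓝 0) ∧
      Tendsto (fun n : ℕ => P {ω | ∃ u ∈ Set.Icc γ (1 - γ), ∃ x ∈ Set.Ioo s0 s1,
          ε * (n : ℝ) ^ (-(1 / 4) : ℝ) <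
            |F2c fXY (genInv (fun y => Fh2 n y x ω) u) x - u|})
        atTop (𝓝 0) := by
  intro γ hγ ε hε
  exact ⟨stmt17_half P s0 s1 (F1c fXY) Fh1
      (fun x hx => margin_facts1 fXY s0 s1 b M δ hG1 x hx) hH2₁ γ hγ ε hε,
    stmt17_half P s0 s1 (F2c fXY) Fh2
      (fun x hx => margin_facts2 fXY s0 s1 b M δ hG1 x hx) hH2₂ γ hγ ε hε⟩
end
end
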